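/- arXiv:2104.01585 — 7 statements merged into one kernel-verified Lean document; each statement's English description precedes it below -/
import Mathlib

section
/- Let κ > 0, ε > 0, V ∈ ℝ. Suppose u, E : [0,1] → ℝ are continuously differentiable, ε·E'(x) = −u(x) for all x ∈ [0,1], ∫₀¹ E(x) dx = V, and the flux boundary conditions u'(0) + κ²ε·E(0) = 0 and u'(1) + κ²ε·E(1) = 0 hold. Then u'(0) = −κ²∫₀¹ (1−s)·u(s) ds − εκ²V and u'(1) = κ²∫₀¹ s·u(s) ds − εκ²V. -/
open Set

/-- **Lemma 2.1 (reduction of the Poisson boundary conditions).**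
If `ε E' = -u` on `[0,1]`, `∫₀¹ E = V`, and the flux boundary conditions
`u'(0) + κ²ε E(0) = 0`, `u'(1) + κ²ε E(1) = 0` hold, then `u` satisfies the
non-local boundary conditions
`u'(0) = -κ² ∫₀¹ (1-s) u(s) ds - εκ²V` and `u'(1) = κ² ∫₀¹ s u(s) ds - εκ²V`. -/
theorem linearized_PNP_nonlocal_bc
    (κ ε V : ℝ) (hκ : 0 < κ) (hε : 0 < ε)
    (u E : ℝ → ℝ)
    (hu : ContDiffOn ℝ 1 u (Icc 0 1))
    (hE : ContDiffOn ℝ 1 E (Icc 0 1))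
    (hfield : ∀ x ∈ Icc (0:ℝ) 1, ε * derivWithin E (Icc 0 1) x = - u x)
    (hV : (∫ x in (0:ℝ)..1, E x) = V)
    (hb0 : derivWithin u (Icc 0 1) 0 + κ ^ 2 * ε * E 0 = 0)
    (hb1 : derivWithin u (Icc 0 1) 1 + κ ^ 2 * ε * E 1 = 0) :
    derivWithin u (Icc 0 1) 0
      = -κ ^ 2 * (∫ s in (0:ℝ)..1, (1 - s) * u s) - ε * κ ^ 2 * V ∧
    derivWithin u (Icc 0 1) 1
      = κ ^ 2 * (∫ s in (0:ℝ)..1, s * u s) - ε * κ ^ 2 * V := by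
  have hicc : uIcc (0:ℝ) 1 = Icc 0 1 := uIcc_of_le zero_le_one
  set E' : ℝ → ℝ := derivWithin E (Icc 0 1) with hE'def
  -- E' equals -u/ε on Icc
  have hE'eq : ∀ x ∈ Icc (0:ℝ) 1, E' x = -u x / ε := by
    intro x hx
    have := hfield x hx
    field_simp
    linarith [this]
  have huC : ContinuousOn u (Icc (0:ℝ) 1) := hu.continuousOn
  have hE'C : ContinuousOn E' (Icc (0:ℝ) 1) := by
    apply ContinuousOn.congr (f := fun x => -u x / ε) _ hE'eq
    exact (huC.neg).div_const ε
  have hE'int : IntervalIntegrable E' MeasureTheory.volume 0 1 := by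
    apply ContinuousOn.intervalIntegrable
    rwa [hicc]
  have hEderiv : ∀ x ∈ uIcc (0:ℝ) 1, HasDerivWithinAt E (E' x) (uIcc 0 1) x := by
    rw [hicc]
    intro x hx
    exact ((hE.differentiableOn one_ne_zero) x hx).hasDerivWithinAt
  have hone : IntervalIntegrable (fun _ : ℝ => (1:ℝ)) MeasureTheory.volume 0 1 :=
    intervalIntegrable_const
  have hEint : IntervalIntegrable E MeasureTheory.volume 0 1 := by
    apply ContinuousOn.intervalIntegrable
    rw [hicc]
    exact hE.continuousOn
  -- IBP with f x = x - 1
  have ibp0 : (∫ x in (0:ℝ)..1, 1 * E x + (x - 1) * E' x)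
      = (1 - 1) * E 1 - (0 - 1) * E 0 := by
    apply intervalIntegral.integral_deriv_mul_eq_sub_of_hasDerivWithinAt
      (u := fun x => x - 1) (u' := fun _ => 1)
    · intro x hx
      simpa using ((hasDerivWithinAt_id x _).sub_const 1)
    · exact hEderiv
    · exact hone
    · exact hE'int
  -- IBP with f x = x
  have ibp1 : (∫ x in (0:ℝ)..1, 1 * E x + x * E' x)
      = 1 * E 1 - 0 * E 0 := by
    apply intervalIntegral.integral_deriv_mul_eq_sub_of_hasDerivWithinAt
      (u := fun x => x) (u' := fun _ => 1)
    · intro x hx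
      exact hasDerivWithinAt_id x _
    · exact hEderiv
    · exact hone
    · exact hE'int
  have hIm : IntervalIntegrable (fun x => (x - 1) * E' x) MeasureTheory.volume 0 1 := by
    apply ContinuousOn.intervalIntegrable
    rw [hicc]
    exact (continuousOn_id.sub continuousOn_const).mul hE'C
  have hIm' : IntervalIntegrable (fun x => x * E' x) MeasureTheory.volume 0 1 := by
    apply ContinuousOn.intervalIntegrable
    rw [hicc]
    exact continuousOn_id.mul hE'C
  -- compute ∫ (x-1) E' = (1/ε) ∫ (x-1)(-u) = -(1/ε)∫(1-x)u
  have key0 : ε * (∫ x in (0:ℝ)..1, (x - 1) * E' x)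
      = (∫ s in (0:ℝ)..1, (1 - s) * u s) := by
    rw [← intervalIntegral.integral_const_mul]
    apply intervalIntegral.integral_congr
    intro x hx
    rw [hicc] at hx
    have h := hfield x hx
    simp only
    linear_combination (x - 1) * h
  have key1 : ε * (∫ x in (0:ℝ)..1, x * E' x)
      = -(∫ s in (0:ℝ)..1, s * u s) := by
    rw [← intervalIntegral.integral_const_mul, ← intervalIntegral.integral_neg]
    apply intervalIntegral.integral_congr
    intro x hx
    rw [hicc] at hx
    have h := hfield x hx
    simp only
    linear_combination x * h
  -- split integrals
  have split0 : (∫ x in (0:ℝ)..1, 1 * E x + (x - 1) * E' x)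
      = (∫ x in (0:ℝ)..1, E x) + ∫ x in (0:ℝ)..1, (x - 1) * E' x := by
    rw [intervalIntegral.integral_add (by simpa using hEint) hIm]
    simp
  have split1 : (∫ x in (0:ℝ)..1, 1 * E x + x * E' x)
      = (∫ x in (0:ℝ)..1, E x) + ∫ x in (0:ℝ)..1, x * E' x := by
    rw [intervalIntegral.integral_add (by simpa using hEint) hIm']
    simp
  rw [split0] at ibp0
  rw [split1] at ibp1
  rw [hV] at ibp0 ibp1
  -- From ibp0 : V + ∫(x-1)E' = E 0, so ε E 0 = ε V + ∫(1-s)u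
  have hE0 : ε * E 0 = ε * V + ∫ s in (0:ℝ)..1, (1 - s) * u s := by
    have h2 : (∫ x in (0:ℝ)..1, (x - 1) * E' x) = E 0 - V := by linarith [ibp0]
    rw [h2] at key0
    linear_combination key0
  have hE1 : ε * E 1 = ε * V - ∫ s in (0:ℝ)..1, s * u s := by
    have h2 : (∫ x in (0:ℝ)..1, x * E' x) = E 1 - V := by linarith [ibp1]
    rw [h2] at key1
    linear_combination key1
  constructor
  · linear_combination hb0 - κ^2 * hE0
  · linear_combination hb1 - κ^2 * hE1
end

section
/- Let κ > 0 and let u : [0,1] × [0,∞) → ℝ be a classical solution (C² in x, C¹ in t, continuous up to the boundary) of u_t = u_xx − κ²u on (0,1) × (0,∞), satisfying for every t ≥ 0 the non-local boundary conditions u_x(0,t) = −κ²∫₀¹ (1−s)·u(s,t) ds and u_x(1,t) = κ²∫₀¹ s·u(s,t) ds. Then the total charge ∫₀¹ u(x,t) dx is constant in t: for all t ≥ 0, ∫₀¹ u(x,t) dx = ∫₀¹ u(x,0) dx. -/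
/-- A classical solution of `w_t = w_xx - c·w` on `(0,1) × (0,∞)`
(`C²` in `x`, `C¹` in `t`, continuous up to the boundary), satisfying the
non-local boundary conditions
`w_x(0,t) = -κ² ∫₀¹ (1-s) w(s,t) ds`, `w_x(1,t) = κ² ∫₀¹ s w(s,t) ds`. -/
def IsClassicalSol (κ c : ℝ) (w : ℝ → ℝ → ℝ) : Prop :=
  (∀ t ∈ Set.Ici (0:ℝ), ContDiffOn ℝ 2 (fun x => w x t) (Set.Icc 0 1)) ∧
  (∀ x ∈ Set.Icc (0:ℝ) 1, ContDiffOn ℝ 1 (fun t => w x t) (Set.Ici 0)) ∧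
  ContinuousOn (fun p : ℝ × ℝ => w p.1 p.2) (Set.Icc 0 1 ×ˢ Set.Ici 0) ∧
  (∀ x ∈ Set.Ioo (0:ℝ) 1, ∀ t > (0:ℝ),
    deriv (fun τ => w x τ) t = deriv (deriv (fun y => w y t)) x - c * w x t) ∧
  (∀ t ∈ Set.Ici (0:ℝ),
    derivWithin (fun x => w x t) (Set.Icc 0 1) 0
      = -κ ^ 2 * ∫ s in (0:ℝ)..1, (1 - s) * w s t) ∧
  (∀ t ∈ Set.Ici (0:ℝ),
    derivWithin (fun x => w x t) (Set.Icc 0 1) 1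
      = κ ^ 2 * ∫ s in (0:ℝ)..1, s * w s t)

namespace PNPCons

open Set MeasureTheory intervalIntegral Filter Topology

/-- On the interior of `Icc 0 1`, a `C²` function has a genuine derivative equal
to `derivWithin`. -/
lemma hasDerivAt_of_C2 {g : ℝ → ℝ} (hg : ContDiffOn ℝ 2 g (Icc 0 1))
    {x : ℝ} (hx : x ∈ Ioo (0:ℝ) 1) :
    HasDerivAt g (derivWithin g (Icc 0 1) x) x := by
  have hnb : Icc (0:ℝ) 1 ∈ 𝓝 x := Icc_mem_nhds hx.1 hx.2
  have hd : DifferentiableWithinAt ℝ g (Icc 0 1) x :=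
    (hg.differentiableOn (by norm_num)) x (Ioo_subset_Icc_self hx)
  have hda : DifferentiableAt ℝ g x := hd.differentiableAt hnb
  rw [derivWithin_of_mem_nhds hnb]
  exact hda.hasDerivAt

lemma deriv_eq_derivWithin_of_C2 {g : ℝ → ℝ} (hg : ContDiffOn ℝ 2 g (Icc 0 1))
    {x : ℝ} (hx : x ∈ Ioo (0:ℝ) 1) :
    deriv g x = derivWithin g (Icc 0 1) x :=
  (derivWithin_of_mem_nhds (Icc_mem_nhds hx.1 hx.2)).symm

/-- second `derivWithin` facts -/
lemma hasDerivAt_deriv_of_C2 {g : ℝ → ℝ} (hg : ContDiffOn ℝ 2 g (Icc 0 1))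
    {x : ℝ} (hx : x ∈ Ioo (0:ℝ) 1) :
    HasDerivAt (deriv g) (derivWithin (derivWithin g (Icc 0 1)) (Icc 0 1) x) x := by
  have hnb : Icc (0:ℝ) 1 ∈ 𝓝 x := Icc_mem_nhds hx.1 hx.2
  have hg1 : ContDiffOn ℝ 1 (derivWithin g (Icc 0 1)) (Icc 0 1) :=
    hg.derivWithin (uniqueDiffOn_Icc one_pos) (by norm_num)
  have hd1 : DifferentiableWithinAt ℝ (derivWithin g (Icc 0 1)) (Icc 0 1) x :=
    (hg1.differentiableOn one_ne_zero) x (Ioo_subset_Icc_self hx)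
  have hda : HasDerivAt (derivWithin g (Icc 0 1))
      (derivWithin (derivWithin g (Icc 0 1)) (Icc 0 1) x) x := by
    have := (hd1.differentiableAt hnb).hasDerivAt
    rwa [derivWithin_of_mem_nhds hnb]
  refine hda.congr_of_eventuallyEq ?_
  filter_upwards [Ioo_mem_nhds hx.1 hx.2] with y hy
  exact (deriv_eq_derivWithin_of_C2 hg hy)

lemma deriv_deriv_eq_of_C2 {g : ℝ → ℝ} (hg : ContDiffOn ℝ 2 g (Icc 0 1))
    {x : ℝ} (hx : x ∈ Ioo (0:ℝ) 1) :
    deriv (deriv g) x = derivWithin (derivWithin g (Icc 0 1)) (Icc 0 1) x :=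
  (hasDerivAt_deriv_of_C2 hg hx).deriv

/-- Second-derivative test at an interior maximum. -/
lemma second_deriv_nonpos_of_isMaxOn {g : ℝ → ℝ} (hg : ContDiffOn ℝ 2 g (Icc 0 1))
    {x₀ : ℝ} (hx₀ : x₀ ∈ Ioo (0:ℝ) 1) (hmax : IsMaxOn g (Icc 0 1) x₀) :
    deriv (deriv g) x₀ ≤ 0 := by
  by_contra hlt
  push_neg at hlt
  have hnb : Icc (0:ℝ) 1 ∈ 𝓝 x₀ := Icc_mem_nhds hx₀.1 hx₀.2
  have hloc : IsLocalMax g x₀ := hmax.isLocalMax hnb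
  have h1z : deriv g x₀ = 0 := hloc.deriv_eq_zero
  have hD : HasDerivAt (deriv g) (deriv (deriv g) x₀) x₀ := by
    have := hasDerivAt_deriv_of_C2 hg hx₀
    rwa [deriv_deriv_eq_of_C2 hg hx₀]
  have hslope : Tendsto (fun y => (deriv g y - deriv g x₀) / (y - x₀)) (𝓝[≠] x₀)
      (𝓝 (deriv (deriv g) x₀)) := by
    have := hasDerivAt_iff_tendsto_slope.1 hD
    simpa [slope_fun_def_field, div_eq_inv_mul] using this
  have hpos : ∀ᶠ y in 𝓝[>] x₀, 0 < deriv g y := by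
    have h2 : Tendsto (fun y => (deriv g y - deriv g x₀) / (y - x₀)) (𝓝[>] x₀)
        (𝓝 (deriv (deriv g) x₀)) :=
      hslope.mono_left (nhdsWithin_mono _ (fun y hy => ne_of_gt hy))
    have h3 : ∀ᶠ y in 𝓝[>] x₀, 0 < (deriv g y - deriv g x₀) / (y - x₀) :=
      h2.eventually (eventually_gt_nhds hlt)
    filter_upwards [h3, self_mem_nhdsWithin] with y hy hy'
    have hyx : (0:ℝ) < y - x₀ := sub_pos.2 hy'
    have := mul_pos hy hyx
    rw [div_mul_cancel₀] at this
    · rw [h1z] at this; linarith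
    · exact ne_of_gt hyx
  obtain ⟨b, hb, hIoo⟩ := mem_nhdsGT_iff_exists_Ioo_subset.1 hpos
  set c := (x₀ + min b 1) / 2 with hc
  have hx₀b : x₀ < min b 1 := lt_min hb hx₀.2
  have hcx : x₀ < c := by simp only [hc]; linarith
  have hcb : c < min b 1 := by simp only [hc]; linarith
  have hc1 : c < 1 := lt_of_lt_of_le hcb (min_le_right _ _)
  have hcb' : c < b := lt_of_lt_of_le hcb (min_le_left _ _)
  have hmono : StrictMonoOn g (Icc x₀ c) := by
    apply strictMonoOn_of_deriv_pos (convex_Icc _ _)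
    · exact hg.continuousOn.mono (Icc_subset_Icc (le_of_lt hx₀.1) (le_of_lt hc1))
    · intro y hy
      rw [interior_Icc] at hy
      exact hIoo ⟨hy.1, lt_trans hy.2 hcb'⟩
  have hltgc : g x₀ < g c :=
    hmono (left_mem_Icc.2 (le_of_lt hcx)) (right_mem_Icc.2 (le_of_lt hcx)) hcx
  have : g c ≤ g x₀ := hmax ⟨le_trans (le_of_lt hx₀.1) (le_of_lt hcx), le_of_lt hc1⟩
  linarith

/-- If `φ` attains its max over `Icc α T` at `t₀ ∈ Ioc α T` and is differentiable
at `t₀`, then the derivative is nonnegative. -/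
lemma deriv_nonneg_at_right_max {φ : ℝ → ℝ} {α T t₀ m : ℝ}
    (ht₀ : t₀ ∈ Ioc α T) (hmax : IsMaxOn φ (Icc α T) t₀)
    (hd : HasDerivAt φ m t₀) : 0 ≤ m := by
  have hslope : Tendsto (fun y => (φ y - φ t₀) / (y - t₀)) (𝓝[<] t₀) (𝓝 m) := by
    have := hasDerivAt_iff_tendsto_slope.1 hd
    have h2 := this.mono_left (nhdsWithin_mono _ (fun y (hy : y ∈ Iio t₀) => ne_of_lt hy))
    simpa [slope_fun_def_field, div_eq_inv_mul] using h2
  have hne : (𝓝[<] t₀).NeBot := by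
    exact nhdsLT_neBot t₀
  refine ge_of_tendsto hslope ?_
  filter_upwards [Ioo_mem_nhdsLT ht₀.1] with y hy
  have h1 : φ y ≤ φ t₀ := hmax ⟨le_of_lt hy.1, le_trans (le_of_lt hy.2) ht₀.2⟩
  have h2 : y - t₀ < 0 := sub_neg.2 hy.2
  exact div_nonneg_of_nonpos (by linarith) (le_of_lt h2)

lemma differentiableAt_of_C2 {g : ℝ → ℝ} (hg : ContDiffOn ℝ 2 g (Icc 0 1))
    {x : ℝ} (hx : x ∈ Ioo (0:ℝ) 1) : DifferentiableAt ℝ g x := by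
  have := hasDerivAt_of_C2 hg hx; exact this.differentiableAt

lemma differentiableAt_deriv_of_C2 {g : ℝ → ℝ} (hg : ContDiffOn ℝ 2 g (Icc 0 1))
    {x : ℝ} (hx : x ∈ Ioo (0:ℝ) 1) : DifferentiableAt ℝ (deriv g) x :=
  (hasDerivAt_deriv_of_C2 hg hx).differentiableAt

/-- second derivative of `(g₁ - g₂)/c` on the interior. -/
lemma deriv_deriv_sub_div {g₁ g₂ : ℝ → ℝ} (hg₁ : ContDiffOn ℝ 2 g₁ (Icc 0 1))
    (hg₂ : ContDiffOn ℝ 2 g₂ (Icc 0 1)) (c : ℝ) {x : ℝ} (hx : x ∈ Ioo (0:ℝ) 1) :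
    deriv (deriv (fun y => (g₁ y - g₂ y) / c)) x
      = (deriv (deriv g₁) x - deriv (deriv g₂) x) / c := by
  have hev : (deriv (fun y => (g₁ y - g₂ y) / c))
      =ᶠ[𝓝 x] (fun y => (deriv g₁ y - deriv g₂ y) / c) := by
    filter_upwards [Ioo_mem_nhds hx.1 hx.2] with y hy
    rw [deriv_div_const, deriv_fun_sub (differentiableAt_of_C2 hg₁ hy)
      (differentiableAt_of_C2 hg₂ hy)]
  rw [hev.deriv_eq, deriv_div_const, deriv_fun_sub (differentiableAt_deriv_of_C2 hg₁ hx)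
      (differentiableAt_deriv_of_C2 hg₂ hx)]

/-- second derivative of `-g` on the interior. -/
lemma deriv_deriv_neg' {g : ℝ → ℝ} (hg : ContDiffOn ℝ 2 g (Icc 0 1))
    {x : ℝ} (hx : x ∈ Ioo (0:ℝ) 1) :
    deriv (deriv (fun y => -g y)) x = -deriv (deriv g) x := by
  have hev : (deriv (fun y => -g y)) =ᶠ[𝓝 x] (fun y => -deriv g y) := by
    filter_upwards [Ioo_mem_nhds hx.1 hx.2] with y hy
    rw [deriv.fun_neg]
  rw [hev.deriv_eq, deriv.fun_neg]

/-- One-sided parabolic maximum principle on `[0,1] × [α,T]`. -/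
lemma max_principle_le (c : ℝ) (hc : 0 ≤ c) (w : ℝ → ℝ → ℝ) (α T B : ℝ)
    (hαT : α < T) (hB : 0 ≤ B)
    (hcont : ContinuousOn (fun p : ℝ × ℝ => w p.1 p.2) (Icc 0 1 ×ˢ Icc α T))
    (hx2 : ∀ t ∈ Ioc α T, ContDiffOn ℝ 2 (fun y => w y t) (Icc 0 1))
    (hpde : ∀ x ∈ Ioo (0:ℝ) 1, ∀ t ∈ Ioc α T,
      HasDerivAt (fun τ => w x τ) (deriv (deriv (fun y => w y t)) x - c * w x t) t)
    (hbot : ∀ x ∈ Icc (0:ℝ) 1, w x α ≤ B)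
    (hside0 : ∀ t ∈ Icc α T, w 0 t ≤ B)
    (hside1 : ∀ t ∈ Icc α T, w 1 t ≤ B) :
    ∀ x ∈ Icc (0:ℝ) 1, ∀ t ∈ Icc α T, w x t ≤ B := by
  intro x hx t ht
  have key : ∀ ε > (0:ℝ), w x t ≤ B + ε * (T - α) := by
    intro ε hε
    set W : ℝ × ℝ → ℝ := fun p => w p.1 p.2 - ε * (p.2 - α) with hW
    have hWc : ContinuousOn W (Icc 0 1 ×ˢ Icc α T) := by
      apply hcont.sub
      exact (continuous_const.mul ((continuous_snd).sub continuous_const)).continuousOn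
    have hK : IsCompact (Icc (0:ℝ) 1 ×ˢ Icc α T) := isCompact_Icc.prod isCompact_Icc
    have hKne : (Icc (0:ℝ) 1 ×ˢ Icc α T).Nonempty :=
      ⟨(0, α), by constructor <;> simp [le_of_lt hαT]⟩
    obtain ⟨p₀, hp₀K, hp₀max⟩ := hK.exists_isMaxOn hKne hWc
    obtain ⟨x₀, t₀⟩ := p₀
    have hx₀ : x₀ ∈ Icc (0:ℝ) 1 := hp₀K.1
    have ht₀ : t₀ ∈ Icc α T := hp₀K.2
    have hmaxB : W (x₀, t₀) ≤ B := by
      by_contra hgt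
      push_neg at hgt
      have hwx₀t₀ : B < w x₀ t₀ - ε * (t₀ - α) := hgt
      have hεt₀ : 0 ≤ ε * (t₀ - α) := mul_nonneg (le_of_lt hε) (by linarith [ht₀.1])
      have hx₀0 : x₀ ≠ 0 := by
        rintro rfl; have := hside0 t₀ ht₀; linarith
      have hx₀1 : x₀ ≠ 1 := by
        rintro rfl; have := hside1 t₀ ht₀; linarith
      have ht₀α : t₀ ≠ α := by
        rintro rfl; have := hbot x₀ hx₀; simp at hwx₀t₀; linarith
      have hx₀o : x₀ ∈ Ioo (0:ℝ) 1 :=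
        ⟨lt_of_le_of_ne hx₀.1 (Ne.symm hx₀0), lt_of_le_of_ne hx₀.2 hx₀1⟩
      have ht₀o : t₀ ∈ Ioc α T := ⟨lt_of_le_of_ne ht₀.1 (Ne.symm ht₀α), ht₀.2⟩
      have hφmax : IsMaxOn (fun τ => w x₀ τ - ε * (τ - α)) (Icc α T) t₀ := by
        intro τ hτ
        have := hp₀max (Set.mk_mem_prod hx₀ hτ)
        simpa [hW] using this
      have hφd : HasDerivAt (fun τ => w x₀ τ - ε * (τ - α))
          ((deriv (deriv (fun y => w y t₀)) x₀ - c * w x₀ t₀) - ε) t₀ := by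
        have h1 := hpde x₀ hx₀o t₀ ht₀o
        have h2 : HasDerivAt (fun τ : ℝ => ε * (τ - α)) ε t₀ := by
          simpa using ((hasDerivAt_id t₀).sub_const α).const_mul ε
        exact h1.sub h2
      have hge : 0 ≤ (deriv (deriv (fun y => w y t₀)) x₀ - c * w x₀ t₀) - ε :=
        deriv_nonneg_at_right_max ht₀o hφmax hφd
      have hgmax : IsMaxOn (fun y => w y t₀) (Icc 0 1) x₀ := by
        intro y hy
        have := hp₀max (Set.mk_mem_prod hy ht₀)
        simp only [hW, mem_setOf_eq] at this ⊢
        linarith [this]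
      have hdd : deriv (deriv (fun y => w y t₀)) x₀ ≤ 0 :=
        second_deriv_nonpos_of_isMaxOn (hx2 t₀ ht₀o) hx₀o hgmax
      have hwpos : 0 ≤ w x₀ t₀ := by linarith
      nlinarith [mul_nonneg hc hwpos]
    have hxt : W (x, t) ≤ B := le_trans (hp₀max (Set.mk_mem_prod hx ht)) hmaxB
    have h5 : w x t ≤ B + ε * (t - α) := by
      simp only [hW] at hxt; linarith
    have hmul : ε * (t - α) ≤ ε * (T - α) :=
      mul_le_mul_of_nonneg_left (by linarith [ht.2]) (le_of_lt hε)
    linarith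
  refine le_of_forall_pos_le_add (fun η hη => ?_)
  have hTα : 0 < T - α := by linarith
  have h6 := key (η / (T - α)) (by positivity)
  calc w x t ≤ B + η / (T - α) * (T - α) := h6
  _ = B + η := by rw [div_mul_cancel₀ _ (ne_of_gt hTα)]

section main
variable {κ : ℝ} {u : ℝ → ℝ → ℝ}

lemma hasDerivAt_time (h2 : ∀ x ∈ Icc (0:ℝ) 1, ContDiffOn ℝ 1 (fun t => u x t) (Ici 0))
    {x : ℝ} (hx : x ∈ Icc (0:ℝ) 1) {t : ℝ} (ht : 0 < t) :
    HasDerivAt (fun τ => u x τ) (deriv (fun τ => u x τ) t) t := by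
  have hnb : Ici (0:ℝ) ∈ 𝓝 t := Ici_mem_nhds ht
  have hd : DifferentiableWithinAt ℝ (fun τ => u x τ) (Ici 0) t :=
    ((h2 x hx).differentiableOn one_ne_zero) t (le_of_lt ht)
  exact (hd.differentiableAt hnb).hasDerivAt

lemma continuousOn_ut (h2 : ∀ x ∈ Icc (0:ℝ) 1, ContDiffOn ℝ 1 (fun t => u x t) (Ici 0))
    {x : ℝ} (hx : x ∈ Icc (0:ℝ) 1) :
    ContinuousOn (fun t => deriv (fun τ => u x τ) t) (Ioi 0) := by
  have hc : ContinuousOn (derivWithin (fun τ => u x τ) (Ici 0)) (Ici 0) :=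
    (h2 x hx).continuousOn_derivWithin (uniqueDiffOn_Ici 0) le_rfl
  refine (hc.mono Ioi_subset_Ici_self).congr (fun t ht => ?_)
  exact (derivWithin_of_mem_nhds (Ici_mem_nhds ht)).symm

lemma exists_bound_at
    (h1 : ∀ t ∈ Ici (0:ℝ), ContDiffOn ℝ 2 (fun x => u x t) (Icc 0 1))
    (h4 : ∀ x ∈ Ioo (0:ℝ) 1, ∀ t > (0:ℝ),
      deriv (fun τ => u x τ) t = deriv (deriv (fun y => u y t)) x - κ ^ 2 * u x t)
    {t : ℝ} (ht : 0 < t) :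
    ∃ C, ∀ x ∈ Icc (0:ℝ) 1, |deriv (fun τ => u x τ) t| ≤ C := by
  set g : ℝ → ℝ := fun y => u y t with hgdef
  have hg : ContDiffOn ℝ 2 g (Icc 0 1) := h1 t (le_of_lt ht)
  set g2 : ℝ → ℝ := derivWithin (derivWithin g (Icc 0 1)) (Icc 0 1) with hg2def
  have hg2c : ContinuousOn g2 (Icc 0 1) :=
    (hg.derivWithin (uniqueDiffOn_Icc one_pos) (by norm_num)).continuousOn_derivWithin
      (uniqueDiffOn_Icc one_pos) le_rfl
  have hcont : ContinuousOn (fun y => |g2 y| + κ ^ 2 * |g y|) (Icc 0 1) :=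
    (hg2c.abs).add (continuousOn_const.mul hg.continuousOn.abs)
  obtain ⟨y₀, hy₀, hy₀max⟩ := isCompact_Icc.exists_isMaxOn (nonempty_Icc.2 zero_le_one) hcont
  refine ⟨max (|g2 y₀| + κ ^ 2 * |g y₀|)
    (max (|deriv (fun τ => u 0 τ) t|) (|deriv (fun τ => u 1 τ) t|)), fun x hx => ?_⟩
  rcases eq_or_lt_of_le hx.1 with h0 | h0
  · rw [← h0]
    exact le_trans (le_max_left _ _) (le_max_right _ _)
  rcases eq_or_lt_of_le hx.2 with h1' | h1'
  · rw [h1']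
    exact le_trans (le_max_right _ _) (le_max_right _ _)
  have hxo : x ∈ Ioo (0:ℝ) 1 := ⟨h0, h1'⟩
  have heq : deriv (fun τ => u x τ) t = g2 x - κ ^ 2 * g x := by
    rw [h4 x hxo t ht, deriv_deriv_eq_of_C2 hg hxo]
  rw [heq]
  refine le_trans (abs_sub _ _) (le_trans ?_ (le_max_left _ _))
  have : |κ ^ 2 * g x| = κ ^ 2 * |g x| := by
    rw [abs_mul, abs_of_nonneg (sq_nonneg κ)]
  rw [this]
  exact hy₀max hx


/-- Baire category: a strip `[0,1] × [α,β] ⊆ [0,1] × [a,b]` on which `u_t` is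
uniformly bounded. -/
lemma baire_strip
    (h1 : ∀ t ∈ Ici (0:ℝ), ContDiffOn ℝ 2 (fun x => u x t) (Icc 0 1))
    (h2 : ∀ x ∈ Icc (0:ℝ) 1, ContDiffOn ℝ 1 (fun t => u x t) (Ici 0))
    (h4 : ∀ x ∈ Ioo (0:ℝ) 1, ∀ t > (0:ℝ),
      deriv (fun τ => u x τ) t = deriv (deriv (fun y => u y t)) x - κ ^ 2 * u x t)
    {a b : ℝ} (ha : 0 < a) (hab : a < b) :
    ∃ α β L, a ≤ α ∧ α < β ∧ β ≤ b ∧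
      ∀ τ ∈ Icc α β, ∀ x ∈ Icc (0:ℝ) 1, |deriv (fun τ' => u x τ') τ| ≤ L := by
  classical
  set A : ℕ → Set ℝ := fun n =>
    {τ | τ ∈ Icc a b ∧ ∀ x ∈ Icc (0:ℝ) 1, |deriv (fun τ' => u x τ') τ| ≤ n} with hA
  have hclosed : ∀ n, IsClosed (A n) := by
    intro n
    have : A n = ⋂ (x : ℝ) (_ : x ∈ Icc (0:ℝ) 1),
        (Icc a b ∩ (fun τ => |deriv (fun τ' => u x τ') τ|) ⁻¹' (Iic (n:ℝ))) := by
      ext τ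
      simp only [hA, mem_setOf_eq, mem_iInter, mem_inter_iff, mem_preimage, mem_Iic]
      constructor
      · rintro ⟨h1, h2⟩ x hx; exact ⟨h1, h2 x hx⟩
      · intro h
        refine ⟨(h 0 (by norm_num)).1, fun x hx => (h x hx).2⟩
    rw [this]
    refine isClosed_iInter (fun x => isClosed_iInter (fun hx => ?_))
    have hcont : ContinuousOn (fun τ => |deriv (fun τ' => u x τ') τ|) (Icc a b) :=
      ((continuousOn_ut h2 hx).mono (fun τ hτ => lt_of_lt_of_le ha hτ.1)).abs
    exact hcont.preimage_isClosed_of_isClosed isClosed_Icc isClosed_Iic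
  have hcover : ∀ τ ∈ Icc a b, ∃ n : ℕ, τ ∈ A n := by
    intro τ hτ
    obtain ⟨C, hC⟩ := exists_bound_at h1 h4 (lt_of_lt_of_le ha hτ.1)
    refine ⟨⌈max C 0⌉₊, hτ, fun x hx => ?_⟩
    exact le_trans (hC x hx) (le_trans (le_max_left C 0) (Nat.le_ceil _))
  -- Baire category argument
  have hexists : ∃ n, (interior (A n)).Nonempty := by
    by_contra hfa
    push_neg at hfa
    have hdense : ∀ n, Dense ((A n)ᶜ) := by
      intro n
      exact interior_eq_empty_iff_dense_compl.1 (hfa n)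
    have hD : Dense (⋂ n, (A n)ᶜ) :=
      dense_iInter_of_isOpen (fun n => (hclosed n).isOpen_compl) hdense
    obtain ⟨τ, hτmem, hτo⟩ := hD.exists_mem_open isOpen_Ioo (nonempty_Ioo.2 hab)
    obtain ⟨n, hn⟩ := hcover τ (Ioo_subset_Icc_self hτo)
    exact (mem_iInter.1 hτmem n) hn
  obtain ⟨N, τ₀, hτ₀⟩ := hexists
  obtain ⟨ε, hε, hball⟩ := Metric.mem_nhds_iff.1 (mem_interior_iff_mem_nhds.1 hτ₀)
  refine ⟨τ₀ - ε/2, τ₀ + ε/2, N, ?_, by linarith, ?_, ?_⟩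
  · have : τ₀ - ε/2 ∈ A N := hball (by
      rw [Metric.mem_ball, Real.dist_eq, abs_lt]; constructor <;> linarith)
    exact this.1.1
  · have : τ₀ + ε/2 ∈ A N := hball (by
      rw [Metric.mem_ball, Real.dist_eq, abs_lt]; constructor <;> linarith)
    exact this.1.2
  · intro τ hτ x hx
    have hτA : τ ∈ A N := by
      apply hball
      rw [Metric.mem_ball, Real.dist_eq]
      rw [abs_lt]; constructor
      · linarith [hτ.1]
      · linarith [hτ.2]
    exact hτA.2 x hx


/-- Forward propagation of the strip bound on `u_t` by the maximum principle. -/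
lemma ut_bounded_forward
    (h1 : ∀ t ∈ Ici (0:ℝ), ContDiffOn ℝ 2 (fun x => u x t) (Icc 0 1))
    (h2 : ∀ x ∈ Icc (0:ℝ) 1, ContDiffOn ℝ 1 (fun t => u x t) (Ici 0))
    (h3 : ContinuousOn (fun p : ℝ × ℝ => u p.1 p.2) (Icc 0 1 ×ˢ Ici 0))
    (h4 : ∀ x ∈ Ioo (0:ℝ) 1, ∀ t > (0:ℝ),
      deriv (fun τ => u x τ) t = deriv (deriv (fun y => u y t)) x - κ ^ 2 * u x t)
    {α β : ℝ} (hα : 0 < α) (hαβ : α < β) {L : ℝ}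
    (hL : ∀ τ ∈ Icc α β, ∀ x ∈ Icc (0:ℝ) 1, |deriv (fun τ' => u x τ') τ| ≤ L)
    {T : ℝ} (hT : α < T) :
    ∃ C, ∀ x ∈ Icc (0:ℝ) 1, ∀ t ∈ Icc α T, |deriv (fun τ => u x τ) t| ≤ C := by
  set T' : ℝ := max T β with hT'def
  have hαT' : α < T' := lt_of_lt_of_le hT (le_max_left _ _)
  set h₀ : ℝ := β - α with hh₀def
  have hh₀ : 0 < h₀ := by simp only [hh₀def]; linarith
  -- bound for the lateral sides
  have h0mem : (0:ℝ) ∈ Icc (0:ℝ) 1 := by norm_num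
  have h1mem : (1:ℝ) ∈ Icc (0:ℝ) 1 := by norm_num
  have hψc : ContinuousOn (fun σ => |deriv (fun τ => u 0 τ) σ| + |deriv (fun τ => u 1 τ) σ|)
      (Icc α (T' + h₀)) := by
    have hsub : Icc α (T' + h₀) ⊆ Ioi (0:ℝ) := fun σ hσ => lt_of_lt_of_le hα hσ.1
    exact (((continuousOn_ut h2 h0mem).mono hsub).abs).add
      (((continuousOn_ut h2 h1mem).mono hsub).abs)
  obtain ⟨σ₀, hσ₀mem, hσ₀max⟩ := isCompact_Icc.exists_isMaxOn
    (nonempty_Icc.2 (by linarith)) hψc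
  set C₀ : ℝ := |deriv (fun τ => u 0 τ) σ₀| + |deriv (fun τ => u 1 τ) σ₀| with hC₀def
  set B : ℝ := max (max L C₀) 0 with hBdef
  have hB0 : 0 ≤ B := le_max_right _ _
  have hLB : L ≤ B := le_trans (le_max_left _ _) (le_max_left _ _)
  have hC₀B : C₀ ≤ B := le_trans (le_max_right _ _) (le_max_left _ _)
  -- the key claim : all difference quotients with step ≤ h₀ are bounded by B
  have key : ∀ h : ℝ, 0 < h → h ≤ h₀ → ∀ x ∈ Icc (0:ℝ) 1, ∀ t ∈ Icc α T',
      |(u x (t + h) - u x t) / h| ≤ B := by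
    intro h hh hhh₀
    set v : ℝ → ℝ → ℝ := fun x τ => (u x (τ + h) - u x τ) / h with hvdef
    -- continuity of v on the box
    have hshift : Continuous (fun p : ℝ × ℝ => (p.1, p.2 + h)) :=
      continuous_fst.prodMk (continuous_snd.add continuous_const)
    have hmap1 : MapsTo (fun p : ℝ × ℝ => (p.1, p.2 + h)) (Icc 0 1 ×ˢ Icc α T')
        (Icc 0 1 ×ˢ Ici 0) := by
      rintro ⟨x, τ⟩ ⟨hx, hτ⟩
      exact ⟨hx, by simp only [mem_Ici]; linarith [hτ.1]⟩
    have hmap2 : MapsTo (id : ℝ × ℝ → ℝ × ℝ) (Icc 0 1 ×ˢ Icc α T') (Icc 0 1 ×ˢ Ici 0) := by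
      rintro ⟨x, τ⟩ ⟨hx, hτ⟩
      exact ⟨hx, le_of_lt (lt_of_lt_of_le hα hτ.1)⟩
    have hvc : ContinuousOn (fun p : ℝ × ℝ => v p.1 p.2) (Icc 0 1 ×ˢ Icc α T') := by
      have c1 : ContinuousOn (fun p : ℝ × ℝ => u p.1 (p.2 + h)) (Icc 0 1 ×ˢ Icc α T') :=
        h3.comp hshift.continuousOn hmap1
      have c2 : ContinuousOn (fun p : ℝ × ℝ => u p.1 p.2) (Icc 0 1 ×ˢ Icc α T') :=
        h3.mono (fun p hp => hmap2 hp)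
      exact (c1.sub c2).div_const h
    -- x-slices of v are C²
    have hvx2 : ∀ t ∈ Ioc α T', ContDiffOn ℝ 2 (fun y => v y t) (Icc 0 1) := by
      intro t htm
      have e1 : (0:ℝ) ≤ t + h := by linarith [htm.1]
      have e2 : (0:ℝ) ≤ t := le_of_lt (lt_trans hα htm.1)
      exact ((h1 (t + h) e1).sub (h1 t e2)).div_const h
    -- PDE for v
    have hvpde : ∀ x ∈ Ioo (0:ℝ) 1, ∀ t ∈ Ioc α T',
        HasDerivAt (fun τ => v x τ) (deriv (deriv (fun y => v y t)) x - κ ^ 2 * v x t) t := by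
      intro x hxo t htm
      have hxm : x ∈ Icc (0:ℝ) 1 := Ioo_subset_Icc_self hxo
      have ht0 : 0 < t := lt_trans hα htm.1
      have hth0 : 0 < t + h := by linarith
      have d1 : HasDerivAt (fun τ => u x (τ + h)) (deriv (fun τ => u x τ) (t + h)) t := by
        have base := hasDerivAt_time h2 hxm hth0
        have comp := HasDerivAt.comp t base ((hasDerivAt_id t).add_const h)
        simpa [Function.comp_def] using comp
      have d2 : HasDerivAt (fun τ => u x τ) (deriv (fun τ => u x τ) t) t :=
        hasDerivAt_time h2 hxm ht0
      have dv : HasDerivAt (fun τ => v x τ)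
          ((deriv (fun τ => u x τ) (t + h) - deriv (fun τ => u x τ) t) / h) t :=
        (d1.sub d2).div_const h
      have hval : (deriv (fun τ => u x τ) (t + h) - deriv (fun τ => u x τ) t) / h
          = deriv (deriv (fun y => v y t)) x - κ ^ 2 * v x t := by
        rw [h4 x hxo (t + h) hth0, h4 x hxo t ht0]
        have e1 : (0:ℝ) ≤ t + h := le_of_lt hth0
        have e2 : (0:ℝ) ≤ t := le_of_lt ht0
        rw [deriv_deriv_sub_div (h1 (t + h) e1) (h1 t e2) h hxo]
        simp only [hvdef]
        ring
      rw [← hval]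
      exact dv
    -- bottom bound via MVT
    have hbot : ∀ x ∈ Icc (0:ℝ) 1, |v x α| ≤ B := by
      intro x hx
      have hcont : ContinuousOn (fun τ => u x τ) (Icc α (α + h)) :=
        (h2 x hx).continuousOn.mono (fun τ hτ => le_trans (le_of_lt hα) hτ.1)
      have hder : ∀ τ ∈ Ioo α (α + h), HasDerivAt (fun τ' => u x τ')
          (deriv (fun τ' => u x τ') τ) τ :=
        fun τ hτ => hasDerivAt_time h2 hx (lt_trans hα hτ.1)
      obtain ⟨ξ, hξ, hξeq⟩ := exists_hasDerivAt_eq_slope (fun τ => u x τ)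
        (fun τ => deriv (fun τ' => u x τ') τ) (by linarith) hcont hder
      have : v x α = deriv (fun τ' => u x τ') ξ := by
        simp only [hvdef]; rw [hξeq]; congr 1; ring
      rw [this]
      refine le_trans (hL ξ ⟨le_of_lt hξ.1, by linarith [hξ.2]⟩ x hx) hLB
    -- side bounds via MVT
    have hside : ∀ z ∈ ({0, 1} : Set ℝ), ∀ t ∈ Icc α T', |v z t| ≤ B := by
      intro z hz t htm
      have hzm : z ∈ Icc (0:ℝ) 1 := by rcases hz with rfl | rfl <;> norm_num
      have hcont : ContinuousOn (fun τ => u z τ) (Icc t (t + h)) :=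
        (h2 z hzm).continuousOn.mono
          (fun τ hτ => le_trans (le_of_lt (lt_of_lt_of_le hα htm.1)) hτ.1)
      have hder : ∀ τ ∈ Ioo t (t + h), HasDerivAt (fun τ' => u z τ')
          (deriv (fun τ' => u z τ') τ) τ :=
        fun τ hτ => hasDerivAt_time h2 hzm (lt_trans (lt_of_lt_of_le hα htm.1) hτ.1)
      obtain ⟨ξ, hξ, hξeq⟩ := exists_hasDerivAt_eq_slope (fun τ => u z τ)
        (fun τ => deriv (fun τ' => u z τ') τ) (by linarith) hcont hder
      have hveq : v z t = deriv (fun τ' => u z τ') ξ := by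
        simp only [hvdef]; rw [hξeq]; congr 1; ring
      have hξmem : ξ ∈ Icc α (T' + h₀) :=
        ⟨le_trans htm.1 (le_of_lt hξ.1), by linarith [hξ.2, htm.2]⟩
      have hbnd := hσ₀max hξmem
      simp only [mem_setOf_eq] at hbnd
      rw [hveq]
      rcases hz with rfl | rfl
      · refine le_trans (le_trans ?_ hbnd) hC₀B
        exact le_add_of_nonneg_right (abs_nonneg _)
      · refine le_trans (le_trans ?_ hbnd) hC₀B
        exact le_add_of_nonneg_left (abs_nonneg _)
    have hside0 : ∀ t ∈ Icc α T', |v 0 t| ≤ B := fun t ht => hside 0 (by norm_num) t ht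
    have hside1 : ∀ t ∈ Icc α T', |v 1 t| ≤ B := fun t ht => hside 1 (by norm_num) t ht
    -- apply the maximum principle to v and -v
    have hup : ∀ x ∈ Icc (0:ℝ) 1, ∀ t ∈ Icc α T', v x t ≤ B :=
      max_principle_le (κ ^ 2) (sq_nonneg κ) v α T' B hαT' hB0 hvc hvx2 hvpde
        (fun x hx => le_trans (le_abs_self _) (hbot x hx))
        (fun t ht => le_trans (le_abs_self _) (hside0 t ht))
        (fun t ht => le_trans (le_abs_self _) (hside1 t ht))
    have hdown : ∀ x ∈ Icc (0:ℝ) 1, ∀ t ∈ Icc α T', -v x t ≤ B := by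
      have hnc : ContinuousOn (fun p : ℝ × ℝ => -v p.1 p.2) (Icc 0 1 ×ˢ Icc α T') := hvc.neg
      have hnx2 : ∀ t ∈ Ioc α T', ContDiffOn ℝ 2 (fun y => -v y t) (Icc 0 1) :=
        fun t ht => (hvx2 t ht).neg
      have hnpde : ∀ x ∈ Ioo (0:ℝ) 1, ∀ t ∈ Ioc α T',
          HasDerivAt (fun τ => -v x τ)
            (deriv (deriv (fun y => -v y t)) x - κ ^ 2 * (-v x t)) t := by
        intro x hxo t htm
        have := (hvpde x hxo t htm).neg
        have hrw : deriv (deriv (fun y => -v y t)) x = -deriv (deriv (fun y => v y t)) x :=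
          deriv_deriv_neg' (hvx2 t htm) hxo
        rw [hrw]
        refine this.congr_deriv ?_
        ring
      exact max_principle_le (κ ^ 2) (sq_nonneg κ) (fun x τ => -v x τ) α T' B hαT' hB0
        hnc hnx2 hnpde
        (fun x hx => le_trans (neg_le_abs _) (hbot x hx))
        (fun t ht => le_trans (neg_le_abs _) (hside0 t ht))
        (fun t ht => le_trans (neg_le_abs _) (hside1 t ht))
    intro x hx t ht
    rw [abs_le]
    exact ⟨by linarith [hdown x hx t ht], hup x hx t ht⟩
  -- pass to the limit h → 0
  refine ⟨B, fun x hx t ht => ?_⟩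
  have htT' : t ∈ Icc α T' := ⟨ht.1, le_trans ht.2 (le_max_left _ _)⟩
  have ht0 : 0 < t := lt_of_lt_of_le hα ht.1
  have hd := hasDerivAt_time h2 hx ht0
  have hslope : Tendsto (fun s => (u x s - u x t) / (s - t)) (𝓝[≠] t)
      (𝓝 (deriv (fun τ => u x τ) t)) := by
    have := hasDerivAt_iff_tendsto_slope.1 hd
    simpa [slope_fun_def_field, div_eq_inv_mul] using this
  have hseq : Tendsto (fun n : ℕ => t + h₀ / (n + 1)) atTop (𝓝[≠] t) := by
    apply tendsto_nhdsWithin_of_tendsto_nhds_of_eventually_within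
    · have hbase : Tendsto (fun n : ℕ => h₀ / (n:ℝ)) atTop (𝓝 0) :=
        tendsto_const_div_atTop_nhds_zero_nat h₀
      have hcomp := hbase.comp (tendsto_add_atTop_nat 1)
      have heq : (fun n : ℕ => h₀ / ((n:ℝ) + 1))
          = (fun n : ℕ => h₀ / (n:ℝ)) ∘ (fun n => n + 1) := by
        funext n; simp only [Function.comp]; push_cast; ring_nf
      have : Tendsto (fun n : ℕ => h₀ / ((n:ℝ) + 1)) atTop (𝓝 0) := by
        rw [heq]; exact hcomp
      simpa using tendsto_const_nhds.add this
    · filter_upwards with n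
      have : 0 < h₀ / ((n:ℝ) + 1) := div_pos hh₀ (by positivity)
      simp only [mem_compl_iff, mem_singleton_iff]
      intro hcontra
      nlinarith [hcontra]
  have hlim : Tendsto (fun n : ℕ => (u x (t + h₀ / (n + 1)) - u x t) / (h₀ / (n + 1)))
      atTop (𝓝 (deriv (fun τ => u x τ) t)) := by
    have := hslope.comp hseq
    simp only [Function.comp_def] at this
    convert this using 2 with n
    congr 1
    ring
  refine le_of_tendsto (hlim.abs) ?_
  filter_upwards with n
  have hpos : 0 < h₀ / ((n:ℝ) + 1) := div_pos hh₀ (by positivity)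
  have hle : h₀ / ((n:ℝ) + 1) ≤ h₀ := by
    rw [div_le_iff₀ (by positivity)]
    nlinarith [hh₀]
  exact key (h₀ / (n + 1)) hpos hle x hx t htT'


/-- At each positive time, the total integral of `u_t` over `(0,1)` vanishes. -/
lemma integral_ut_eq_zero
    (h1 : ∀ t ∈ Ici (0:ℝ), ContDiffOn ℝ 2 (fun x => u x t) (Icc 0 1))
    (h4 : ∀ x ∈ Ioo (0:ℝ) 1, ∀ t > (0:ℝ),
      deriv (fun τ => u x τ) t = deriv (deriv (fun y => u y t)) x - κ ^ 2 * u x t)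
    (h5 : ∀ t ∈ Ici (0:ℝ), derivWithin (fun x => u x t) (Icc 0 1) 0
      = -κ ^ 2 * ∫ s in (0:ℝ)..1, (1 - s) * u s t)
    (h6 : ∀ t ∈ Ici (0:ℝ), derivWithin (fun x => u x t) (Icc 0 1) 1
      = κ ^ 2 * ∫ s in (0:ℝ)..1, s * u s t)
    {t : ℝ} (ht : 0 < t) :
    (∫ x in (0:ℝ)..1, deriv (fun τ => u x τ) t) = 0 := by
  have ht' : t ∈ Ici (0:ℝ) := le_of_lt ht
  set g : ℝ → ℝ := fun y => u y t with hgdef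
  have hg : ContDiffOn ℝ 2 g (Icc 0 1) := h1 t ht'
  set g1 : ℝ → ℝ := derivWithin g (Icc 0 1) with hg1def
  set g2 : ℝ → ℝ := derivWithin g1 (Icc 0 1) with hg2def
  have hg1c : ContinuousOn g1 (Icc 0 1) :=
    hg.continuousOn_derivWithin (uniqueDiffOn_Icc one_pos) (by norm_num)
  have hg2c : ContinuousOn g2 (Icc 0 1) :=
    (hg.derivWithin (uniqueDiffOn_Icc one_pos) (by norm_num)).continuousOn_derivWithin
      (uniqueDiffOn_Icc one_pos) le_rfl
  -- FTC for g1 with derivative g2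
  have hftc : (∫ x in (0:ℝ)..1, g2 x) = g1 1 - g1 0 := by
    apply integral_eq_sub_of_hasDeriv_right_of_le zero_le_one hg1c
    · intro x hx
      have := hasDerivAt_deriv_of_C2 hg hx
      have hcongr : HasDerivAt g1 (g2 x) x := by
        refine HasDerivAt.congr_of_eventuallyEq this ?_
        filter_upwards [Ioo_mem_nhds hx.1 hx.2] with y hy
        exact (deriv_eq_derivWithin_of_C2 hg hy).symm
      exact hcongr.hasDerivWithinAt
    · exact (hg2c.mono (by rw [uIcc_of_le zero_le_one])).intervalIntegrable
  -- integrals of u and moments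
  have hucont : ContinuousOn g (Icc 0 1) := hg.continuousOn
  have huint : IntervalIntegrable g volume 0 1 :=
    (hucont.mono (by rw [uIcc_of_le zero_le_one])).intervalIntegrable
  -- rewrite the integrand a.e.
  have hcongr_int : (∫ x in (0:ℝ)..1, deriv (fun τ => u x τ) t)
      = ∫ x in (0:ℝ)..1, (g2 x - κ ^ 2 * g x) := by
    rw [intervalIntegral.integral_of_le zero_le_one,
        intervalIntegral.integral_of_le zero_le_one,
        MeasureTheory.integral_Ioc_eq_integral_Ioo,
        MeasureTheory.integral_Ioc_eq_integral_Ioo]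
    apply setIntegral_congr_fun measurableSet_Ioo
    intro x hx
    show deriv (fun τ => u x τ) t = g2 x - κ ^ 2 * g x
    rw [h4 x hx t ht, deriv_deriv_eq_of_C2 hg hx]
  rw [hcongr_int]
  have hg2int : IntervalIntegrable g2 volume 0 1 :=
    (hg2c.mono (by rw [uIcc_of_le zero_le_one])).intervalIntegrable
  have hrest : IntervalIntegrable (fun x => κ ^ 2 * g x) volume 0 1 := huint.const_mul _
  rw [intervalIntegral.integral_sub hg2int hrest, hftc,
      intervalIntegral.integral_const_mul]
  have hbc1 : g1 1 = κ ^ 2 * ∫ s in (0:ℝ)..1, s * u s t := h6 t ht'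
  have hbc0 : g1 0 = -κ ^ 2 * ∫ s in (0:ℝ)..1, (1 - s) * u s t := h5 t ht'
  rw [hbc1, hbc0]
  -- ∫ s·u + ∫ (1-s)·u = ∫ u
  have hint1 : IntervalIntegrable (fun s => s * u s t) volume 0 1 := by
    apply ContinuousOn.intervalIntegrable
    rw [uIcc_of_le zero_le_one]
    exact continuousOn_id.mul hucont
  have hint2 : IntervalIntegrable (fun s => (1 - s) * u s t) volume 0 1 := by
    apply ContinuousOn.intervalIntegrable
    rw [uIcc_of_le zero_le_one]
    exact (continuousOn_const.sub continuousOn_id).mul hucont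
  have hsum : (∫ s in (0:ℝ)..1, s * u s t) + (∫ s in (0:ℝ)..1, (1 - s) * u s t)
      = ∫ s in (0:ℝ)..1, u s t := by
    rw [← intervalIntegral.integral_add hint1 hint2]
    apply intervalIntegral.integral_congr
    intro s _
    ring
  have : (∫ x in (0:ℝ)..1, g x) = ∫ s in (0:ℝ)..1, u s t := rfl
  nlinarith [hsum]


/-- Charge conservation between two positive times, given a uniform bound on `u_t`. -/
lemma charge_eq_on
    (h1 : ∀ t ∈ Ici (0:ℝ), ContDiffOn ℝ 2 (fun x => u x t) (Icc 0 1))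
    (h2 : ∀ x ∈ Icc (0:ℝ) 1, ContDiffOn ℝ 1 (fun t => u x t) (Ici 0))
    (h3 : ContinuousOn (fun p : ℝ × ℝ => u p.1 p.2) (Icc 0 1 ×ˢ Ici 0))
    (h4 : ∀ x ∈ Ioo (0:ℝ) 1, ∀ t > (0:ℝ),
      deriv (fun τ => u x τ) t = deriv (deriv (fun y => u y t)) x - κ ^ 2 * u x t)
    (h5 : ∀ t ∈ Ici (0:ℝ), derivWithin (fun x => u x t) (Icc 0 1) 0
      = -κ ^ 2 * ∫ s in (0:ℝ)..1, (1 - s) * u s t)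
    (h6 : ∀ t ∈ Ici (0:ℝ), derivWithin (fun x => u x t) (Icc 0 1) 1
      = κ ^ 2 * ∫ s in (0:ℝ)..1, s * u s t)
    {α t' : ℝ} (hα : 0 < α) (hαt' : α ≤ t')
    {C : ℝ} (hC : ∀ x ∈ Icc (0:ℝ) 1, ∀ t ∈ Icc α t', |deriv (fun τ => u x τ) t| ≤ C) :
    (∫ x in (0:ℝ)..1, u x t') = ∫ x in (0:ℝ)..1, u x α := by
  rcases eq_or_lt_of_le hαt' with rfl | hlt
  · rfl
  -- time FTC for each x
  have hFTC : ∀ x ∈ Icc (0:ℝ) 1,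
      u x t' - u x α = ∫ τ in α..t', deriv (fun τ' => u x τ') τ := by
    intro x hx
    rw [eq_comm]
    apply integral_eq_sub_of_hasDeriv_right_of_le hαt'
    · exact (h2 x hx).continuousOn.mono (fun τ hτ => le_trans (le_of_lt hα) hτ.1)
    · intro τ hτ
      exact (hasDerivAt_time h2 hx (lt_trans hα hτ.1)).hasDerivWithinAt
    · apply ContinuousOn.intervalIntegrable
      rw [uIcc_of_le hαt']
      exact (continuousOn_ut h2 hx).mono (fun τ hτ => lt_of_lt_of_le hα hτ.1)
  -- slice continuity & integrability of u
  have hslice : ∀ {t : ℝ}, 0 ≤ t → IntervalIntegrable (fun x => u x t) volume 0 1 := by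
    intro t ht
    apply ContinuousOn.intervalIntegrable
    rw [uIcc_of_le zero_le_one]
    exact (h1 t ht).continuousOn
  have hstep1 : (∫ x in (0:ℝ)..1, u x t') - (∫ x in (0:ℝ)..1, u x α)
      = ∫ x in (0:ℝ)..1, (u x t' - u x α) :=
    (intervalIntegral.integral_sub (hslice (le_trans (le_of_lt hα) hαt'))
      (hslice (le_of_lt hα))).symm
  have hstep2 : (∫ x in (0:ℝ)..1, (u x t' - u x α))
      = ∫ x in (0:ℝ)..1, (∫ τ in α..t', deriv (fun τ' => u x τ') τ) := by
    apply intervalIntegral.integral_congr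
    intro x hx
    rw [uIcc_of_le zero_le_one] at hx
    exact hFTC x hx
  -- Fubini
  set f : ℝ → ℝ → ℝ := fun x τ => deriv (fun τ' => u x τ') τ with hfdef
  set S : Set (ℝ × ℝ) := Ioc (0:ℝ) 1 ×ˢ Ioc α t' with hSdef
  have hSmeas : MeasurableSet S := measurableSet_Ioc.prod measurableSet_Ioc
  set μ : Measure ℝ := volume.restrict (Ioc (0:ℝ) 1) with hμdef
  set ν : Measure ℝ := volume.restrict (Ioc α t') with hνdef
  haveI : IsFiniteMeasure μ := by
    constructor; rw [hμdef, Measure.restrict_apply_univ]; exact measure_Ioc_lt_top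
  haveI : IsFiniteMeasure ν := by
    constructor; rw [hνdef, Measure.restrict_apply_univ]; exact measure_Ioc_lt_top
  have hprod : μ.prod ν = (volume : Measure (ℝ × ℝ)).restrict S := by
    rw [hμdef, hνdef, Measure.prod_restrict, ← hSdef, MeasureTheory.Measure.volume_eq_prod]
  have hintegrable : Integrable (Function.uncurry f) (μ.prod ν) := by
    constructor
    · -- a.e. strong measurability via difference quotients
      rw [hprod]
      have hFn : ∀ n : ℕ, AEStronglyMeasurable
          (fun p : ℝ × ℝ => (u p.1 (p.2 + 1/(n+1)) - u p.1 p.2) / (1/(n+1)))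
          ((volume : Measure (ℝ × ℝ)).restrict S) := by
        intro n
        apply ContinuousOn.aestronglyMeasurable _ hSmeas
        have hpos : (0:ℝ) < 1/((n:ℝ)+1) := by positivity
        have hsub : S ⊆ Icc 0 1 ×ˢ Ici 0 := by
          rintro ⟨x, τ⟩ ⟨hx, hτ⟩
          exact ⟨Ioc_subset_Icc_self hx, le_of_lt (lt_trans hα hτ.1)⟩
        have c1 : ContinuousOn (fun p : ℝ × ℝ => u p.1 (p.2 + 1/(n+1))) S := by
          have hshift : Continuous (fun p : ℝ × ℝ => (p.1, p.2 + 1/((n:ℝ)+1))) := by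
            continuity
          have hmaps : MapsTo (fun p : ℝ × ℝ => (p.1, p.2 + 1/((n:ℝ)+1))) S
              (Icc 0 1 ×ˢ Ici 0) := by
            rintro ⟨x, τ⟩ ⟨hx, hτ⟩
            exact ⟨Ioc_subset_Icc_self hx, by
              simp only [mem_Ici]; have := hτ.1; nlinarith⟩
          exact h3.comp hshift.continuousOn hmaps
        have c2 : ContinuousOn (fun p : ℝ × ℝ => u p.1 p.2) S := h3.mono hsub
        exact (c1.sub c2).div_const _
      apply aestronglyMeasurable_of_tendsto_ae atTop hFn
      filter_upwards [ae_restrict_mem hSmeas] with p hp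
      obtain ⟨hpx, hpτ⟩ := hp
      have hτ0 : 0 < p.2 := lt_trans hα hpτ.1
      have hd := hasDerivAt_time h2 (Ioc_subset_Icc_self hpx) hτ0
      have hslope : Tendsto (fun s => (u p.1 s - u p.1 p.2) / (s - p.2)) (𝓝[≠] p.2)
          (𝓝 (f p.1 p.2)) := by
        have := hasDerivAt_iff_tendsto_slope.1 hd
        simpa [hfdef, slope_fun_def_field, div_eq_inv_mul] using this
      have hseq : Tendsto (fun n : ℕ => p.2 + 1/(n+1)) atTop (𝓝[≠] p.2) := by
        apply tendsto_nhdsWithin_of_tendsto_nhds_of_eventually_within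
        · have hbase : Tendsto (fun n : ℕ => 1/((n:ℝ)+1)) atTop (𝓝 0) :=
            tendsto_one_div_add_atTop_nhds_zero_nat
          simpa using tendsto_const_nhds.add hbase
        · filter_upwards with n
          have : (0:ℝ) < 1/((n:ℝ)+1) := by positivity
          simp only [mem_compl_iff, mem_singleton_iff]
          intro hcontra
          nlinarith [hcontra]
      have hcomp := hslope.comp hseq
      refine Tendsto.congr (fun n => ?_) hcomp
      simp only [Function.comp]
      congr 1
      ring
    · -- finite integral from the uniform bound
      apply HasFiniteIntegral.of_bounded (C := |C|)
      rw [hprod]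
      filter_upwards [ae_restrict_mem hSmeas] with p hp
      obtain ⟨hpx, hpτ⟩ := hp
      have := hC p.1 (Ioc_subset_Icc_self hpx) p.2 (Ioc_subset_Icc_self hpτ)
      calc ‖Function.uncurry f p‖ = |f p.1 p.2| := rfl
      _ ≤ C := this
      _ ≤ |C| := le_abs_self C
  have hswap := MeasureTheory.integral_integral_swap hintegrable
  -- translate to interval integrals
  have hstep3 : (∫ x in (0:ℝ)..1, (∫ τ in α..t', f x τ)) = ∫ x, (∫ τ, f x τ ∂ν) ∂μ := by
    rw [intervalIntegral.integral_of_le zero_le_one]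
    apply setIntegral_congr_fun measurableSet_Ioc
    intro x _
    show (∫ τ in α..t', f x τ) = ∫ τ, f x τ ∂ν
    rw [intervalIntegral.integral_of_le hαt']
  have hstep4 : (∫ τ, (∫ x, f x τ ∂μ) ∂ν) = 0 := by
    have hzero : ∀ τ ∈ Ioc α t', (∫ x, f x τ ∂μ) = 0 := by
      intro τ hτ
      have : (∫ x in (0:ℝ)..1, f x τ) = 0 :=
        integral_ut_eq_zero h1 h4 h5 h6 (lt_trans hα hτ.1)
      rwa [intervalIntegral.integral_of_le zero_le_one] at this
    calc (∫ τ, (∫ x, f x τ ∂μ) ∂ν) = ∫ τ in Ioc α t', (fun _ => (0:ℝ)) τ := by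
          apply setIntegral_congr_fun measurableSet_Ioc hzero
    _ = 0 := by simp
  have : (∫ x in (0:ℝ)..1, u x t') - (∫ x in (0:ℝ)..1, u x α) = 0 := by
    rw [hstep1, hstep2, hstep3, hswap, hstep4]
  linarith

theorem main_thm
    (h1 : ∀ t ∈ Ici (0:ℝ), ContDiffOn ℝ 2 (fun x => u x t) (Icc 0 1))
    (h2 : ∀ x ∈ Icc (0:ℝ) 1, ContDiffOn ℝ 1 (fun t => u x t) (Ici 0))
    (h3 : ContinuousOn (fun p : ℝ × ℝ => u p.1 p.2) (Icc 0 1 ×ˢ Ici 0))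
    (h4 : ∀ x ∈ Ioo (0:ℝ) 1, ∀ t > (0:ℝ),
      deriv (fun τ => u x τ) t = deriv (deriv (fun y => u y t)) x - κ ^ 2 * u x t)
    (h5 : ∀ t ∈ Ici (0:ℝ), derivWithin (fun x => u x t) (Icc 0 1) 0
      = -κ ^ 2 * ∫ s in (0:ℝ)..1, (1 - s) * u s t)
    (h6 : ∀ t ∈ Ici (0:ℝ), derivWithin (fun x => u x t) (Icc 0 1) 1
      = κ ^ 2 * ∫ s in (0:ℝ)..1, s * u s t) :
    ∀ t ≥ (0:ℝ), (∫ x in (0:ℝ)..1, u x t) = ∫ x in (0:ℝ)..1, u x 0 := by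
  intro t ht
  rcases eq_or_lt_of_le ht with heq | ht0
  · rw [← heq]
  -- for each n, find a small positive time αₙ with equal charge
  have key : ∀ n : ℕ, ∃ α : ℝ, 0 < α ∧ α ≤ 1/(n+1) ∧ α ≤ t ∧
      (∫ x in (0:ℝ)..1, u x t) = ∫ x in (0:ℝ)..1, u x α := by
    intro n
    set δ : ℝ := min t (1/(n+1)) with hδdef
    have hδpos : 0 < δ := lt_min ht0 (by positivity)
    obtain ⟨α, β, L, hαa, hαβ, hβb, hL⟩ := baire_strip h1 h2 h4
      (half_pos hδpos) (half_lt_self hδpos)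
    have hα0 : 0 < α := lt_of_lt_of_le (half_pos hδpos) hαa
    have hβδ : β ≤ δ := hβb
    have hαt : α < t := lt_of_lt_of_le (lt_of_lt_of_le hαβ hβδ) (min_le_left _ _)
    obtain ⟨C, hC⟩ := ut_bounded_forward h1 h2 h3 h4 hα0 hαβ hL hαt
    refine ⟨α, hα0, ?_, le_of_lt hαt, ?_⟩
    · exact le_trans (le_of_lt (lt_of_lt_of_le hαβ hβδ)) (min_le_right _ _)
    · exact charge_eq_on h1 h2 h3 h4 h5 h6 hα0 (le_of_lt hαt) hC
  -- uniform continuity of u on [0,1]²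
  have hK : IsCompact (Icc (0:ℝ) 1 ×ˢ Icc (0:ℝ) 1) := isCompact_Icc.prod isCompact_Icc
  have hcont : ContinuousOn (fun p : ℝ × ℝ => u p.1 p.2) (Icc 0 1 ×ˢ Icc (0:ℝ) 1) :=
    h3.mono (prod_mono_right Icc_subset_Ici_self)
  have hUC := hK.uniformContinuousOn_of_continuous hcont
  rw [Metric.uniformContinuousOn_iff] at hUC
  -- conclude via ε-argument
  have habs : ∀ ε > (0:ℝ),
      |(∫ x in (0:ℝ)..1, u x t) - ∫ x in (0:ℝ)..1, u x 0| ≤ ε := by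
    intro ε hε
    obtain ⟨δ', hδ'pos, hδ'⟩ := hUC ε hε
    obtain ⟨n, hn⟩ := exists_nat_gt (1/δ')
    obtain ⟨α, hα0, hα1n, hαt, hQeq⟩ := key n
    have hα1 : α ≤ 1 := le_trans hα1n (by
      rw [div_le_one (by positivity)]; linarith [Nat.cast_nonneg (α := ℝ) n])
    have hαδ' : α < δ' := by
      have h1n : 1/((n:ℝ)+1) < δ' := by
        rw [div_lt_iff₀ (by positivity)]
        rw [div_lt_iff₀ hδ'pos] at hn
        nlinarith [hδ'pos]
      linarith [hα1n]
    have hbound : ∀ x ∈ Icc (0:ℝ) 1, ‖u x α - u x 0‖ ≤ ε := by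
      intro x hx
      have hp : (x, α) ∈ Icc (0:ℝ) 1 ×ˢ Icc (0:ℝ) 1 := ⟨hx, le_of_lt hα0, hα1⟩
      have hq : (x, (0:ℝ)) ∈ Icc (0:ℝ) 1 ×ˢ Icc (0:ℝ) 1 := ⟨hx, le_rfl, zero_le_one⟩
      have hdist : dist ((x, α) : ℝ × ℝ) ((x, 0) : ℝ × ℝ) < δ' := by
        rw [Prod.dist_eq]
        simp only [dist_self, Real.dist_eq, sub_zero]
        rw [max_eq_right (by positivity)]
        rw [abs_of_pos hα0]
        exact hαδ'
      have := hδ' (x, α) hp (x, 0) hq hdist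
      rw [Real.dist_eq] at this
      exact le_of_lt this
    have hint : ∀ {s : ℝ}, 0 ≤ s → IntervalIntegrable (fun x => u x s) volume 0 1 := by
      intro s hs
      apply ContinuousOn.intervalIntegrable
      rw [uIcc_of_le zero_le_one]
      exact (h1 s hs).continuousOn
    rw [hQeq, ← intervalIntegral.integral_sub (hint (le_of_lt hα0)) (hint le_rfl)]
    have := intervalIntegral.norm_integral_le_of_norm_le_const
      (C := ε) (f := fun x => u x α - u x 0) (a := 0) (b := 1) ?_
    · simpa using this
    · intro x hx
      rw [uIoc_of_le zero_le_one] at hx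
      exact hbound x (Ioc_subset_Icc_self hx)
  have : |(∫ x in (0:ℝ)..1, u x t) - ∫ x in (0:ℝ)..1, u x 0| ≤ 0 := by
    refine le_of_forall_pos_le_add (fun ε hε => ?_)
    simpa using habs ε hε
  have := abs_nonpos_iff.mp this
  linarith [sub_eq_zero.mp this]

end main

end PNPCons

/-- **Conservation of total charge.** For a classical solution of the
linearized PNP equation `u_t = u_xx - κ²u` under the non-local boundary
conditions, the total charge `∫₀¹ u(x,t) dx` is constant in time. -/
theorem linearized_PNP_charge_conservation
    (κ : ℝ) (hκ : 0 < κ) (u : ℝ → ℝ → ℝ)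
    (hu : IsClassicalSol κ (κ ^ 2) u) :
    ∀ t ≥ (0:ℝ), (∫ x in (0:ℝ)..1, u x t) = ∫ x in (0:ℝ)..1, u x 0 := by
  obtain ⟨h1, h2, h3, h4, h5, h6⟩ := hu
  exact PNPCons.main_thm h1 h2 h3 h4 h5 h6
end

section
/- Let κ > 0 and let u : [0,1] × [0,∞) → ℝ be a classical solution (C² in x, C¹ in t, continuous up to the boundary) of u_t = u_xx − κ²u on (0,1) × (0,∞), satisfying for every t ≥ 0 the non-local boundary conditions u_x(0,t) = −κ²∫₀¹ (1−s)·u(s,t) ds and u_x(1,t) = κ²∫₀¹ s·u(s,t) ds. If u(x,0) ≥ 0 for all x ∈ [0,1], then u(x,t) ≥ 0 for all x ∈ [0,1] and all t ≥ 0. -/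
section PNPauxSection
open Set Filter Topology

namespace PNPaux

noncomputable def g (κ x : ℝ) : ℝ := Real.cosh (κ * (x - 1/2))

lemma g_pos (κ x : ℝ) : 0 < g κ x := by unfold g; exact Real.cosh_pos _

lemma g_cont (κ : ℝ) : Continuous (g κ) := by
  unfold g; exact Real.continuous_cosh.comp (by continuity)

lemma lin_hasDerivAt (κ s : ℝ) : HasDerivAt (fun y : ℝ => κ * (y - 1/2)) κ s := by
  exact (((hasDerivAt_id s).sub_const (1/2)).const_mul κ).congr_deriv (mul_one κ)

lemma g_hasDerivAt (κ x : ℝ) :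
    HasDerivAt (g κ) (κ * Real.sinh (κ * (x - 1/2))) x := by
  have := (lin_hasDerivAt κ x).cosh
  unfold g
  simpa [mul_comm] using this

lemma g'_hasDerivAt (κ x : ℝ) :
    HasDerivAt (fun y => κ * Real.sinh (κ * (y - 1/2))) (κ ^ 2 * g κ x) x := by
  have h2 := ((lin_hasDerivAt κ x).sinh).const_mul κ
  refine h2.congr_deriv ?_
  unfold g; ring

lemma integral_weight_left (κ : ℝ) (hκ : κ ≠ 0) :
    ∫ s in (0:ℝ)..1, (1 - s) * g κ s = Real.sinh (κ/2) / κ := by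
  have key : ∀ s ∈ uIcc (0:ℝ) 1,
      HasDerivAt (fun y => (1 - y) * Real.sinh (κ*(y - 1/2)) / κ + Real.cosh (κ*(y - 1/2)) / κ^2)
        ((1 - s) * g κ s) s := by
    intro s _
    have h1 : HasDerivAt (fun y : ℝ => (1 - y) * Real.sinh (κ*(y - 1/2)))
        ((-1) * Real.sinh (κ*(s-1/2)) + (1 - s) * (Real.cosh (κ*(s-1/2)) * κ)) s :=
      ((hasDerivAt_id s).const_sub 1).mul (lin_hasDerivAt κ s).sinh
    have h2 := (h1.div_const κ).add (((lin_hasDerivAt κ s).cosh).div_const (κ^2))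
    refine h2.congr_deriv ?_
    unfold g
    field_simp
    ring
  rw [intervalIntegral.integral_eq_sub_of_hasDerivAt key
    (Continuous.intervalIntegrable ((continuous_const.sub continuous_id).mul (g_cont κ)) 0 1)]
  have e1 : κ * ((1:ℝ) - 1/2) = κ/2 := by ring
  have e0 : κ * ((0:ℝ) - 1/2) = -(κ/2) := by ring
  simp only [e1, e0, Real.sinh_neg, Real.cosh_neg]
  field_simp
  ring

lemma integral_weight_right (κ : ℝ) (hκ : κ ≠ 0) :
    ∫ s in (0:ℝ)..1, s * g κ s = Real.sinh (κ/2) / κ := by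
  have key : ∀ s ∈ uIcc (0:ℝ) 1,
      HasDerivAt (fun y => y * Real.sinh (κ*(y - 1/2)) / κ - Real.cosh (κ*(y - 1/2)) / κ^2)
        (s * g κ s) s := by
    intro s _
    have h1 : HasDerivAt (fun y : ℝ => y * Real.sinh (κ*(y - 1/2)))
        (1 * Real.sinh (κ*(s-1/2)) + s * (Real.cosh (κ*(s-1/2)) * κ)) s :=
      (hasDerivAt_id s).mul (lin_hasDerivAt κ s).sinh
    have h2 := (h1.div_const κ).sub (((lin_hasDerivAt κ s).cosh).div_const (κ^2))
    refine h2.congr_deriv ?_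
    unfold g
    field_simp
    ring
  rw [intervalIntegral.integral_eq_sub_of_hasDerivAt key
    (Continuous.intervalIntegrable (continuous_id.mul (g_cont κ)) 0 1)]
  have e1 : κ * ((1:ℝ) - 1/2) = κ/2 := by ring
  have e0 : κ * ((0:ℝ) - 1/2) = -(κ/2) := by ring
  simp only [e1, e0, Real.sinh_neg, Real.cosh_neg]
  field_simp
  ring

/-- A nonnegative function on `[0,1]` vanishing at the left endpoint has
nonnegative (one-sided) derivative there. -/
lemma deriv_nonneg_left {q : ℝ → ℝ} {d : ℝ}
    (hd : HasDerivWithinAt q d (Icc 0 1) 0)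
    (hq : ∀ x ∈ Icc (0:ℝ) 1, 0 ≤ q x) (h0 : q 0 = 0) : 0 ≤ d := by
  rw [hasDerivWithinAt_iff_tendsto_slope] at hd
  have hle : 𝓝[Ioc (0:ℝ) 1] (0:ℝ) ≤ 𝓝[Icc (0:ℝ) 1 \ {0}] 0 :=
    nhdsWithin_mono _ (fun x hx => ⟨Ioc_subset_Icc_self hx, ne_of_gt hx.1⟩)
  have hne : (𝓝[Ioc (0:ℝ) 1] (0:ℝ)).NeBot := by
    rw [nhdsWithin_Ioc_eq_nhdsGT zero_lt_one]; infer_instance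
  have hd' := hd.mono_left hle
  refine ge_of_tendsto hd' ?_
  filter_upwards [self_mem_nhdsWithin] with x hx
  rw [slope_def_field, h0, sub_zero, sub_zero]
  exact div_nonneg (hq x (Ioc_subset_Icc_self hx)) (le_of_lt hx.1)

/-- A nonnegative function on `[0,1]` vanishing at the right endpoint has
nonpositive (one-sided) derivative there. -/
lemma deriv_nonpos_right {q : ℝ → ℝ} {d : ℝ}
    (hd : HasDerivWithinAt q d (Icc 0 1) 1)
    (hq : ∀ x ∈ Icc (0:ℝ) 1, 0 ≤ q x) (h1 : q 1 = 0) : d ≤ 0 := by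
  rw [hasDerivWithinAt_iff_tendsto_slope] at hd
  have hle : 𝓝[Ico (0:ℝ) 1] (1:ℝ) ≤ 𝓝[Icc (0:ℝ) 1 \ {1}] 1 :=
    nhdsWithin_mono _ (fun x hx => ⟨Ico_subset_Icc_self hx, ne_of_lt hx.2⟩)
  have hne : (𝓝[Ico (0:ℝ) 1] (1:ℝ)).NeBot := by
    rw [nhdsWithin_Ico_eq_nhdsLT zero_lt_one]; infer_instance
  have hd' := hd.mono_left hle
  refine le_of_tendsto hd' ?_
  filter_upwards [self_mem_nhdsWithin] with x hx
  rw [slope_def_field, h1, sub_zero]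
  exact div_nonpos_of_nonneg_of_nonpos (hq x (Ico_subset_Icc_self hx)) (by linarith [hx.2])

/-- If `h` attains its minimum over `[0,T]` at `t₀ ∈ (0,T]` and is
differentiable there, then `h'(t₀) ≤ 0`. -/
lemma deriv_nonpos_time {h : ℝ → ℝ} {d T t₀ : ℝ} (h0 : 0 < t₀) (hT : t₀ ≤ T)
    (hd : HasDerivAt h d t₀) (hmin : ∀ t ∈ Icc (0:ℝ) T, h t₀ ≤ h t) : d ≤ 0 := by
  have hd' := (hd.hasDerivWithinAt (s := Ioo 0 t₀))
  rw [hasDerivWithinAt_iff_tendsto_slope,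
    diff_singleton_eq_self (by simp [lt_irrefl])] at hd'
  have hne : (𝓝[Ioo (0:ℝ) t₀] t₀).NeBot := by
    rw [nhdsWithin_Ioo_eq_nhdsLT h0]; infer_instance
  refine le_of_tendsto hd' ?_
  filter_upwards [self_mem_nhdsWithin] with x hx
  rw [slope_def_field]
  exact div_nonpos_of_nonneg_of_nonpos
    (sub_nonneg.2 (hmin x ⟨le_of_lt hx.1, le_trans (le_of_lt hx.2) hT⟩))
    (by linarith [hx.2])

/-- Second-derivative test (necessity direction): at a local minimum,
the second derivative is nonnegative. -/
lemma second_deriv_nonneg {q : ℝ → ℝ} {x₁ d2 : ℝ}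
    (hdiff : ∀ᶠ x in 𝓝 x₁, DifferentiableAt ℝ q x)
    (hd2 : HasDerivAt (deriv q) d2 x₁)
    (hmin : IsLocalMin q x₁) : 0 ≤ d2 := by
  by_contra hneg
  push_neg at hneg
  have h0 : deriv q x₁ = 0 := hmin.deriv_eq_zero
  have hs := (hd2.hasDerivWithinAt (s := Iio x₁))
  rw [hasDerivWithinAt_iff_tendsto_slope,
    diff_singleton_eq_self (notMem_Iio.2 le_rfl)] at hs
  have hev : ∀ᶠ x in 𝓝[<] x₁, slope (deriv q) x₁ x < 0 :=
    hs.eventually (eventually_lt_nhds hneg)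
  have hpos : ∀ᶠ x in 𝓝[<] x₁,
      0 < deriv q x ∧ q x₁ ≤ q x ∧ DifferentiableAt ℝ q x := by
    filter_upwards [hev, self_mem_nhdsWithin,
      (hmin.filter_mono nhdsWithin_le_nhds), (hdiff.filter_mono nhdsWithin_le_nhds)]
      with x hx hx' hxm hxd
    refine ⟨?_, hxm, hxd⟩
    rw [slope_def_field, h0, sub_zero] at hx
    rcases lt_trichotomy (deriv q x) 0 with h | h | h
    · exfalso
      have : 0 < deriv q x / (x - x₁) :=
        div_pos_of_neg_of_neg h (by simpa using (mem_Iio.1 hx'))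
      linarith
    · exfalso; rw [h] at hx; simp at hx
    · exact h
  obtain ⟨l, hl, hsub⟩ := mem_nhdsLT_iff_exists_Ioo_subset.1 hpos
  set l' := (l + x₁) / 2 with hl'
  have hll' : l < l' := by simp only [hl']; linarith [mem_Iio.1 hl]
  have hl'x : l' < x₁ := by simp only [hl']; linarith [mem_Iio.1 hl]
  have hdiffIcc : ∀ x ∈ Icc l' x₁, DifferentiableAt ℝ q x := by
    intro x hx
    rcases eq_or_lt_of_le hx.2 with rfl | hlt
    · exact hdiff.self_of_nhds
    · exact (hsub ⟨lt_of_lt_of_le hll' hx.1, hlt⟩).2.2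
  have hmono : StrictMonoOn q (Icc l' x₁) := by
    refine strictMonoOn_of_deriv_pos (convex_Icc l' x₁)
      (fun x hx => (hdiffIcc x hx).continuousAt.continuousWithinAt) ?_
    intro x hx
    rw [interior_Icc] at hx
    exact (hsub ⟨lt_trans hll' hx.1, hx.2⟩).1
  have h1 : q l' < q x₁ :=
    hmono ⟨le_rfl, hl'x.le⟩ ⟨hl'x.le, le_rfl⟩ hl'x
  have h2 : q x₁ ≤ q l' := (hsub ⟨hll', hl'x⟩).2.1
  linarith

/-- Interior contradiction: the function `u(·,·)/g + εt` cannot attain its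
minimum over `[0,1] × [0,T]` at an interior spatial point with positive time. -/
lemma interior_contradiction
    (κ : ℝ) (hκ : 0 < κ) (u : ℝ → ℝ → ℝ) (hu : IsClassicalSol κ (κ ^ 2) u)
    {ε T x₁ t₀ : ℝ} (hε : 0 < ε) (hx₁ : x₁ ∈ Ioo (0:ℝ) 1)
    (ht₀ : 0 < t₀) (ht₀T : t₀ ≤ T)
    (hmin : ∀ x ∈ Icc (0:ℝ) 1, ∀ t ∈ Icc (0:ℝ) T,
      u x₁ t₀ / g κ x₁ + ε * t₀ ≤ u x t / g κ x + ε * t) : False := by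
  obtain ⟨hC, hCt, _, hPDEall, _, _⟩ := hu
  have hvC : ContDiffOn ℝ 2 (fun y => u y t₀) (Icc 0 1) := hC t₀ (mem_Ici.2 ht₀.le)
  have hgx₁ : (0:ℝ) < g κ x₁ := g_pos κ x₁
  set c₁ := u x₁ t₀ / g κ x₁ with hc₁
  have hux₁ : u x₁ t₀ = c₁ * g κ x₁ := by
    rw [hc₁]; field_simp
  set q : ℝ → ℝ := fun y => u y t₀ - c₁ * g κ y with hqdef
  have hq0 : q x₁ = 0 := by simp [hqdef, hux₁]
  have hqnn : ∀ x ∈ Icc (0:ℝ) 1, 0 ≤ q x := by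
    intro x hx
    have h1 := hmin x hx t₀ ⟨ht₀.le, ht₀T⟩
    have hgx : (0:ℝ) < g κ x := g_pos κ x
    have h2 : c₁ ≤ u x t₀ / g κ x := by linarith
    have h3 : c₁ * g κ x ≤ u x t₀ := by
      rw [← div_mul_cancel₀ (u x t₀) (ne_of_gt hgx)]
      exact mul_le_mul_of_nonneg_right h2 hgx.le
    simpa [hqdef] using sub_nonneg.2 h3
  have hIccnb : Icc (0:ℝ) 1 ∈ 𝓝 x₁ := Icc_mem_nhds hx₁.1 hx₁.2
  have hvd : ∀ x ∈ Ioo (0:ℝ) 1, DifferentiableAt ℝ (fun y => u y t₀) x := fun x hx =>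
    ((hvC x (Ioo_subset_Icc_self hx)).contDiffAt
      (Icc_mem_nhds hx.1 hx.2)).differentiableAt (by norm_num)
  have hvC' : ContDiffOn ℝ 2 (fun y => u y t₀) (Ioo 0 1) := hvC.mono Ioo_subset_Icc_self
  have hdv : ContDiffOn ℝ 1 (deriv (fun y => u y t₀)) (Ioo 0 1) :=
    hvC'.deriv_of_isOpen isOpen_Ioo (by norm_num)
  have hdvd : DifferentiableAt ℝ (deriv (fun y => u y t₀)) x₁ :=
    ((hdv.differentiableOn one_ne_zero) x₁ hx₁).differentiableAt (isOpen_Ioo.mem_nhds hx₁)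
  have hqeq : ∀ x ∈ Ioo (0:ℝ) 1,
      deriv q x = deriv (fun y => u y t₀) x - c₁ * (κ * Real.sinh (κ * (x - 1/2))) := by
    intro x hx
    have hgd : DifferentiableAt ℝ (fun y => g κ y) x := (g_hasDerivAt κ x).differentiableAt
    rw [hqdef]
    rw [deriv_fun_sub (hvd x hx) (hgd.const_mul c₁), deriv_const_mul _ hgd,
      (g_hasDerivAt κ x).deriv]
  have hEv : deriv q =ᶠ[𝓝 x₁]
      fun x => deriv (fun y => u y t₀) x - c₁ * (κ * Real.sinh (κ * (x - 1/2))) :=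
    eventuallyEq_of_mem (isOpen_Ioo.mem_nhds hx₁) hqeq
  have hD : HasDerivAt (deriv q)
      (deriv (deriv (fun y => u y t₀)) x₁ - c₁ * (κ ^ 2 * g κ x₁)) x₁ := by
    have h2 : HasDerivAt
        (fun x => deriv (fun y => u y t₀) x - c₁ * (κ * Real.sinh (κ * (x - 1/2))))
        (deriv (deriv (fun y => u y t₀)) x₁ - c₁ * (κ ^ 2 * g κ x₁)) x₁ :=
      (hdvd.hasDerivAt).sub ((g'_hasDerivAt κ x₁).const_mul c₁)
    exact h2.congr_of_eventuallyEq hEv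
  have hqdiff : ∀ᶠ x in 𝓝 x₁, DifferentiableAt ℝ q x := by
    filter_upwards [isOpen_Ioo.mem_nhds hx₁] with x hx
    exact (hvd x hx).sub (((g_hasDerivAt κ x).differentiableAt).const_mul c₁)
  have hlocmin : IsLocalMin q x₁ := by
    show ∀ᶠ x in 𝓝 x₁, q x₁ ≤ q x
    filter_upwards [hIccnb] with x hx
    exact hq0.le.trans (hqnn x hx)
  have hDnn : 0 ≤ deriv (deriv (fun y => u y t₀)) x₁ - c₁ * (κ ^ 2 * g κ x₁) :=
    second_deriv_nonneg hqdiff hD hlocmin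
  have hPDE := hPDEall x₁ hx₁ t₀ ht₀
  have hut : ContDiffOn ℝ 1 (fun t => u x₁ t) (Ici 0) := hCt x₁ (Ioo_subset_Icc_self hx₁)
  have hutd : DifferentiableAt ℝ (fun t => u x₁ t) t₀ :=
    ((hut t₀ (mem_Ici.2 ht₀.le)).contDiffAt (Ici_mem_nhds ht₀)).differentiableAt one_ne_zero
  have hd : HasDerivAt (fun s => u x₁ s + ε * g κ x₁ * s)
      (deriv (fun s => u x₁ s) t₀ + ε * g κ x₁) t₀ := by
    have := (hutd.hasDerivAt).add ((hasDerivAt_id t₀).const_mul (ε * g κ x₁))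
    exact this.congr_deriv (by simp)
  have hhmin : ∀ s ∈ Icc (0:ℝ) T,
      u x₁ t₀ + ε * g κ x₁ * t₀ ≤ u x₁ s + ε * g κ x₁ * s := by
    intro s hs
    have h1 := hmin x₁ (Ioo_subset_Icc_self hx₁) s hs
    have e1 : u x₁ t₀ / g κ x₁ * g κ x₁ = u x₁ t₀ := div_mul_cancel₀ _ (ne_of_gt hgx₁)
    have e2 : u x₁ s / g κ x₁ * g κ x₁ = u x₁ s := div_mul_cancel₀ _ (ne_of_gt hgx₁)
    nlinarith [mul_le_mul_of_nonneg_right h1 hgx₁.le]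
  have hle : deriv (fun s => u x₁ s) t₀ + ε * g κ x₁ ≤ 0 :=
    deriv_nonpos_time ht₀ ht₀T hd hhmin
  have hpos : (0:ℝ) < ε * g κ x₁ := mul_pos hε hgx₁
  rw [hPDE, hux₁] at hle
  nlinarith [hDnn, hle, hpos]

/-- If the minimum is at the left endpoint `x = 0`, the non-local boundary
condition forces the minimum to also be attained at an interior point. -/
lemma boundary_left
    (κ : ℝ) (hκ : 0 < κ) (u : ℝ → ℝ → ℝ) (hu : IsClassicalSol κ (κ ^ 2) u)
    {ε T t₀ : ℝ} (hε : 0 < ε) (ht₀ : 0 < t₀) (ht₀T : t₀ ≤ T)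
    (hmin : ∀ x ∈ Icc (0:ℝ) 1, ∀ t ∈ Icc (0:ℝ) T,
      u 0 t₀ / g κ 0 + ε * t₀ ≤ u x t / g κ x + ε * t) :
    ∃ x₁ ∈ Ioo (0:ℝ) 1, u x₁ t₀ / g κ x₁ = u 0 t₀ / g κ 0 := by
  obtain ⟨hC, _, _, _, hBC0, _⟩ := hu
  have hvC : ContDiffOn ℝ 2 (fun y => u y t₀) (Icc 0 1) := hC t₀ (mem_Ici.2 ht₀.le)
  have hg0 : (0:ℝ) < g κ 0 := g_pos κ 0
  set c := u 0 t₀ / g κ 0 with hc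
  have hu0 : u 0 t₀ = c * g κ 0 := by rw [hc]; field_simp
  set q : ℝ → ℝ := fun y => u y t₀ - c * g κ y with hqdef
  have hq0 : q 0 = 0 := by simp [hqdef, hu0]
  have hqnn : ∀ x ∈ Icc (0:ℝ) 1, 0 ≤ q x := by
    intro x hx
    have h1 := hmin x hx t₀ ⟨ht₀.le, ht₀T⟩
    have hgx : (0:ℝ) < g κ x := g_pos κ x
    have h2 : c ≤ u x t₀ / g κ x := by linarith
    have h3 : c * g κ x ≤ u x t₀ := by
      rw [← div_mul_cancel₀ (u x t₀) (ne_of_gt hgx)]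
      exact mul_le_mul_of_nonneg_right h2 hgx.le
    simpa [hqdef] using sub_nonneg.2 h3
  have hmem0 : (0:ℝ) ∈ Icc (0:ℝ) 1 := by norm_num
  have hvW : DifferentiableWithinAt ℝ (fun y => u y t₀) (Icc 0 1) 0 :=
    (hvC.differentiableOn (by norm_num)) 0 hmem0
  have hBC := hBC0 t₀ (mem_Ici.2 ht₀.le)
  have hvHD : HasDerivWithinAt (fun y => u y t₀)
      (-κ ^ 2 * ∫ s in (0:ℝ)..1, (1 - s) * u s t₀) (Icc 0 1) 0 := by
    rw [← hBC]; exact hvW.hasDerivWithinAt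
  have hqHD : HasDerivWithinAt q
      ((-κ ^ 2 * ∫ s in (0:ℝ)..1, (1 - s) * u s t₀)
        - c * (κ * Real.sinh (κ * ((0:ℝ) - 1/2)))) (Icc 0 1) 0 :=
    hvHD.sub (((g_hasDerivAt κ 0).hasDerivWithinAt).const_mul c)
  have hd0 := deriv_nonneg_left hqHD hqnn hq0
  have hvcont : ContinuousOn (fun y => u y t₀) (Icc 0 1) := hvC.continuousOn
  have hκ2 : (0:ℝ) < κ ^ 2 := by positivity
  have key1 : κ ^ 2 * (∫ s in (0:ℝ)..1, (1 - s) * u s t₀)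
      ≤ κ ^ 2 * (c * (Real.sinh (κ/2) / κ)) := by
    have e : c * (κ * Real.sinh (κ * ((0:ℝ) - 1/2)))
        = -(κ ^ 2 * (c * (Real.sinh (κ/2) / κ))) := by
      rw [show κ * ((0:ℝ) - 1/2) = -(κ/2) by ring, Real.sinh_neg]
      field_simp
    linarith [hd0, e]
  have key2 : (∫ s in (0:ℝ)..1, (1 - s) * u s t₀) ≤ c * (Real.sinh (κ/2) / κ) :=
    le_of_mul_le_mul_left key1 hκ2
  have hint1 : IntervalIntegrable (fun s => (1 - s) * u s t₀) MeasureTheory.volume 0 1 := by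
    apply ContinuousOn.intervalIntegrable
    rw [uIcc_of_le zero_le_one]
    exact (continuous_const.sub continuous_id).continuousOn.mul hvcont
  have hint2 : IntervalIntegrable (fun s => (1 - s) * (c * g κ s)) MeasureTheory.volume 0 1 :=
    Continuous.intervalIntegrable
      ((continuous_const.sub continuous_id).mul (continuous_const.mul (g_cont κ))) 0 1
  have hsum : ∫ s in (0:ℝ)..1, (1 - s) * q s
      = (∫ s in (0:ℝ)..1, (1 - s) * u s t₀)
        - ∫ s in (0:ℝ)..1, (1 - s) * (c * g κ s) := by
    rw [← intervalIntegral.integral_sub hint1 hint2]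
    congr 1
    ext s
    simp [hqdef]
    ring
  have hIg : ∫ s in (0:ℝ)..1, (1 - s) * (c * g κ s) = c * (Real.sinh (κ/2) / κ) := by
    have : ∫ s in (0:ℝ)..1, (1 - s) * (c * g κ s)
        = c * ∫ s in (0:ℝ)..1, (1 - s) * g κ s := by
      rw [← intervalIntegral.integral_const_mul]
      congr 1
      ext s
      ring
    rw [this, integral_weight_left κ (ne_of_gt hκ)]
  have hIq : ∫ s in (0:ℝ)..1, (1 - s) * q s ≤ 0 := by
    rw [hsum, hIg]; linarith
  by_contra hcon
  push_neg at hcon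
  have hqpos : ∀ x ∈ Ioo (0:ℝ) 1, 0 < (1 - x) * q x := by
    intro x hx
    have h1 : 0 ≤ q x := hqnn x (Ioo_subset_Icc_self hx)
    have h2 : q x ≠ 0 := by
      intro h
      apply hcon x hx
      have : u x t₀ = c * g κ x := by
        have h' : u x t₀ - c * g κ x = 0 := h
        linarith
      rw [this]
      exact mul_div_cancel_right₀ c (ne_of_gt (g_pos κ x))
    exact mul_pos (by linarith [hx.2]) (lt_of_le_of_ne h1 (Ne.symm h2))
  have hintq : IntervalIntegrable (fun s => (1 - s) * q s) MeasureTheory.volume 0 1 := by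
    apply ContinuousOn.intervalIntegrable
    rw [uIcc_of_le zero_le_one]
    exact (continuous_const.sub continuous_id).continuousOn.mul
      (hvcont.sub (continuous_const.mul (g_cont κ)).continuousOn)
  have := intervalIntegral.intervalIntegral_pos_of_pos_on hintq hqpos zero_lt_one
  linarith

/-- If the minimum is at the right endpoint `x = 1`, the non-local boundary
condition forces the minimum to also be attained at an interior point. -/
lemma boundary_right
    (κ : ℝ) (hκ : 0 < κ) (u : ℝ → ℝ → ℝ) (hu : IsClassicalSol κ (κ ^ 2) u)
    {ε T t₀ : ℝ} (hε : 0 < ε) (ht₀ : 0 < t₀) (ht₀T : t₀ ≤ T)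
    (hmin : ∀ x ∈ Icc (0:ℝ) 1, ∀ t ∈ Icc (0:ℝ) T,
      u 1 t₀ / g κ 1 + ε * t₀ ≤ u x t / g κ x + ε * t) :
    ∃ x₁ ∈ Ioo (0:ℝ) 1, u x₁ t₀ / g κ x₁ = u 1 t₀ / g κ 1 := by
  obtain ⟨hC, _, _, _, _, hBC1⟩ := hu
  have hvC : ContDiffOn ℝ 2 (fun y => u y t₀) (Icc 0 1) := hC t₀ (mem_Ici.2 ht₀.le)
  have hg1 : (0:ℝ) < g κ 1 := g_pos κ 1
  set c := u 1 t₀ / g κ 1 with hc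
  have hu1 : u 1 t₀ = c * g κ 1 := by rw [hc]; field_simp
  set q : ℝ → ℝ := fun y => u y t₀ - c * g κ y with hqdef
  have hq1 : q 1 = 0 := by simp [hqdef, hu1]
  have hqnn : ∀ x ∈ Icc (0:ℝ) 1, 0 ≤ q x := by
    intro x hx
    have h1 := hmin x hx t₀ ⟨ht₀.le, ht₀T⟩
    have hgx : (0:ℝ) < g κ x := g_pos κ x
    have h2 : c ≤ u x t₀ / g κ x := by linarith
    have h3 : c * g κ x ≤ u x t₀ := by
      rw [← div_mul_cancel₀ (u x t₀) (ne_of_gt hgx)]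
      exact mul_le_mul_of_nonneg_right h2 hgx.le
    simpa [hqdef] using sub_nonneg.2 h3
  have hmem1 : (1:ℝ) ∈ Icc (0:ℝ) 1 := by norm_num
  have hvW : DifferentiableWithinAt ℝ (fun y => u y t₀) (Icc 0 1) 1 :=
    (hvC.differentiableOn (by norm_num)) 1 hmem1
  have hBC := hBC1 t₀ (mem_Ici.2 ht₀.le)
  have hvHD : HasDerivWithinAt (fun y => u y t₀)
      (κ ^ 2 * ∫ s in (0:ℝ)..1, s * u s t₀) (Icc 0 1) 1 := by
    rw [← hBC]; exact hvW.hasDerivWithinAt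
  have hqHD : HasDerivWithinAt q
      ((κ ^ 2 * ∫ s in (0:ℝ)..1, s * u s t₀)
        - c * (κ * Real.sinh (κ * ((1:ℝ) - 1/2)))) (Icc 0 1) 1 :=
    hvHD.sub (((g_hasDerivAt κ 1).hasDerivWithinAt).const_mul c)
  have hd1 := deriv_nonpos_right hqHD hqnn hq1
  have hvcont : ContinuousOn (fun y => u y t₀) (Icc 0 1) := hvC.continuousOn
  have hκ2 : (0:ℝ) < κ ^ 2 := by positivity
  have key1 : κ ^ 2 * (∫ s in (0:ℝ)..1, s * u s t₀)
      ≤ κ ^ 2 * (c * (Real.sinh (κ/2) / κ)) := by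
    have e : c * (κ * Real.sinh (κ * ((1:ℝ) - 1/2)))
        = κ ^ 2 * (c * (Real.sinh (κ/2) / κ)) := by
      rw [show κ * ((1:ℝ) - 1/2) = κ/2 by ring]
      field_simp
    linarith [hd1, e]
  have key2 : (∫ s in (0:ℝ)..1, s * u s t₀) ≤ c * (Real.sinh (κ/2) / κ) :=
    le_of_mul_le_mul_left key1 hκ2
  have hint1 : IntervalIntegrable (fun s => s * u s t₀) MeasureTheory.volume 0 1 := by
    apply ContinuousOn.intervalIntegrable
    rw [uIcc_of_le zero_le_one]
    exact continuous_id.continuousOn.mul hvcont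
  have hint2 : IntervalIntegrable (fun s => s * (c * g κ s)) MeasureTheory.volume 0 1 :=
    Continuous.intervalIntegrable
      (continuous_id.mul (continuous_const.mul (g_cont κ))) 0 1
  have hsum : ∫ s in (0:ℝ)..1, s * q s
      = (∫ s in (0:ℝ)..1, s * u s t₀) - ∫ s in (0:ℝ)..1, s * (c * g κ s) := by
    rw [← intervalIntegral.integral_sub hint1 hint2]
    congr 1
    ext s
    simp [hqdef]
    ring
  have hIg : ∫ s in (0:ℝ)..1, s * (c * g κ s) = c * (Real.sinh (κ/2) / κ) := by
    have : ∫ s in (0:ℝ)..1, s * (c * g κ s)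
        = c * ∫ s in (0:ℝ)..1, s * g κ s := by
      rw [← intervalIntegral.integral_const_mul]
      congr 1
      ext s
      ring
    rw [this, integral_weight_right κ (ne_of_gt hκ)]
  have hIq : ∫ s in (0:ℝ)..1, s * q s ≤ 0 := by
    rw [hsum, hIg]; linarith
  by_contra hcon
  push_neg at hcon
  have hqpos : ∀ x ∈ Ioo (0:ℝ) 1, 0 < x * q x := by
    intro x hx
    have h1 : 0 ≤ q x := hqnn x (Ioo_subset_Icc_self hx)
    have h2 : q x ≠ 0 := by
      intro h
      apply hcon x hx
      have : u x t₀ = c * g κ x := by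
        have h' : u x t₀ - c * g κ x = 0 := h
        linarith
      rw [this]
      exact mul_div_cancel_right₀ c (ne_of_gt (g_pos κ x))
    exact mul_pos hx.1 (lt_of_le_of_ne h1 (Ne.symm h2))
  have hintq : IntervalIntegrable (fun s => s * q s) MeasureTheory.volume 0 1 := by
    apply ContinuousOn.intervalIntegrable
    rw [uIcc_of_le zero_le_one]
    exact continuous_id.continuousOn.mul
      (hvcont.sub (continuous_const.mul (g_cont κ)).continuousOn)
  have := intervalIntegral.intervalIntegral_pos_of_pos_on hintq hqpos zero_lt_one
  linarith

end PNPaux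

end PNPauxSection

/-- **Preservation of positivity.** For a classical solution of the
linearized PNP equation `u_t = u_xx - κ²u` under the non-local boundary
conditions, nonnegativity of the initial data is preserved in time. -/
theorem linearized_PNP_positivity
    (κ : ℝ) (hκ : 0 < κ) (u : ℝ → ℝ → ℝ)
    (hu : IsClassicalSol κ (κ ^ 2) u)
    (hpos : ∀ x ∈ Set.Icc (0:ℝ) 1, 0 ≤ u x 0) :
    ∀ x ∈ Set.Icc (0:ℝ) 1, ∀ t ≥ (0:ℝ), 0 ≤ u x t := by
  intro x hx t ht
  rcases eq_or_lt_of_le ht with h0 | htpos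
  · rw [← h0]; exact hpos x hx
  · have hg : (0:ℝ) < PNPaux.g κ x := PNPaux.g_pos κ x
    have key : ∀ ε : ℝ, 0 < ε → 0 ≤ u x t + ε * t * PNPaux.g κ x := by
      intro ε hε
      have hKne : (Set.Icc (0:ℝ) 1 ×ˢ Set.Icc (0:ℝ) t).Nonempty :=
        ⟨(0, 0), ⟨⟨le_rfl, zero_le_one⟩, ⟨le_rfl, htpos.le⟩⟩⟩
      have hFc : ContinuousOn (fun p : ℝ × ℝ => u p.1 p.2 / PNPaux.g κ p.1 + ε * p.2)
          (Set.Icc (0:ℝ) 1 ×ˢ Set.Icc (0:ℝ) t) := by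
        apply ContinuousOn.add
        · apply ContinuousOn.div
          · exact (hu.2.2.1).mono (Set.prod_mono subset_rfl Set.Icc_subset_Ici_self)
          · exact ((PNPaux.g_cont κ).comp continuous_fst).continuousOn
          · exact fun p _ => ne_of_gt (PNPaux.g_pos κ p.1)
        · exact (continuous_const.mul continuous_snd).continuousOn
      obtain ⟨⟨x₀, t₀⟩, hpK, hpmin⟩ :=
        (isCompact_Icc.prod isCompact_Icc).exists_isMinOn hKne hFc
      have hpx : x₀ ∈ Set.Icc (0:ℝ) 1 := (Set.mem_prod.1 hpK).1
      have hpt : t₀ ∈ Set.Icc (0:ℝ) t := (Set.mem_prod.1 hpK).2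
      have hmin : ∀ y ∈ Set.Icc (0:ℝ) 1, ∀ s ∈ Set.Icc (0:ℝ) t,
          u x₀ t₀ / PNPaux.g κ x₀ + ε * t₀ ≤ u y s / PNPaux.g κ y + ε * s := by
        intro y hy s hs
        exact isMinOn_iff.mp hpmin (y, s) (Set.mk_mem_prod hy hs)
      have hFp : 0 ≤ u x₀ t₀ / PNPaux.g κ x₀ + ε * t₀ := by
        rcases eq_or_lt_of_le hpt.1 with ht0 | ht0
        · rw [← ht0]
          have h1 : 0 ≤ u x₀ 0 / PNPaux.g κ x₀ :=
            div_nonneg (hpos x₀ hpx) (PNPaux.g_pos κ x₀).le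
          simpa using h1
        · exfalso
          have ht0T : t₀ ≤ t := hpt.2
          rcases eq_or_lt_of_le hpx.1 with hx0 | hx0
          · -- x₀ = 0
            subst hx0
            obtain ⟨x₁, hx₁, he⟩ :=
              PNPaux.boundary_left κ hκ u hu hε ht0 ht0T hmin
            refine PNPaux.interior_contradiction κ hκ u hu hε hx₁ ht0 ht0T ?_
            intro y hy s hs
            rw [he]
            exact hmin y hy s hs
          · rcases eq_or_lt_of_le hpx.2 with hx1 | hx1
            · -- x₀ = 1
              subst hx1
              obtain ⟨x₁, hx₁, he⟩ :=
                PNPaux.boundary_right κ hκ u hu hε ht0 ht0T hmin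
              refine PNPaux.interior_contradiction κ hκ u hu hε hx₁ ht0 ht0T ?_
              intro y hy s hs
              rw [he]
              exact hmin y hy s hs
            · exact PNPaux.interior_contradiction κ hκ u hu hε ⟨hx0, hx1⟩ ht0 ht0T hmin
      have htle : 0 ≤ u x t / PNPaux.g κ x + ε * t :=
        le_trans hFp (hmin x hx t ⟨htpos.le, le_rfl⟩)
      have h2 : 0 ≤ (u x t / PNPaux.g κ x + ε * t) * PNPaux.g κ x :=
        mul_nonneg htle hg.le
      rw [add_mul, div_mul_cancel₀ _ (ne_of_gt hg)] at h2
      linarith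
    by_contra hneg
    push_neg at hneg
    have hC : (0:ℝ) < t * PNPaux.g κ x := mul_pos htpos hg
    have hk := key (-(u x t) / (2 * (t * PNPaux.g κ x)))
      (div_pos (by linarith) (by linarith))
    have e : -(u x t) / (2 * (t * PNPaux.g κ x)) * t * PNPaux.g κ x = -(u x t) / 2 := by
      field_simp
    rw [e] at hk
    linarith
end

section
/- Let κ > 0 and let λ > 0 satisfy cos(√λ/2) ≠ 0 and the transcendental equation 2·tan(√λ/2) = √λ·(λ + κ²)/κ². Then the function ψ(x) = sin(√λ·(x − 1/2)) satisfies ψ''(x) + λ·ψ(x) = 0 on [0,1], together with the non-local boundary conditions ψ'(0) = −κ²∫₀¹(1−s)·ψ(s)ds and ψ'(1) = κ²∫₀¹ s·ψ(s)ds. Hence ψ is an eigenfunction of d²/dx² under these boundary conditions with eigenvalue −λ. -/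
/-- **Odd-mode eigenfunctions.** If `λ > 0` satisfies `cos(√λ/2) ≠ 0` and the
transcendental equation `2 tan(√λ/2) = √λ(λ+κ²)/κ²`, then
`ψ(x) = sin(√λ(x-1/2))` satisfies `ψ'' + λψ = 0` on `[0,1]` together with the
non-local boundary conditions `ψ'(0) = -κ²∫₀¹(1-s)ψ(s)ds`,
`ψ'(1) = κ²∫₀¹ s·ψ(s)ds`. Hence `ψ` is an eigenfunction of `d²/dx²` under
these boundary conditions with eigenvalue `-λ`. -/
theorem sin_odd_eigenfunction (κ l : ℝ) (hκ : 0 < κ) (hl : 0 < l)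
    (hcos : Real.cos (Real.sqrt l / 2) ≠ 0)
    (htan : 2 * Real.tan (Real.sqrt l / 2)
      = Real.sqrt l * (l + κ ^ 2) / κ ^ 2) :
    (∀ x ∈ Set.Icc (0:ℝ) 1,
      deriv (deriv (fun y : ℝ => Real.sin (Real.sqrt l * (y - 1/2)))) x
        + l * Real.sin (Real.sqrt l * (x - 1/2)) = 0) ∧
    deriv (fun y : ℝ => Real.sin (Real.sqrt l * (y - 1/2))) 0
      = -κ ^ 2 * ∫ s in (0:ℝ)..1,
          (1 - s) * Real.sin (Real.sqrt l * (s - 1/2)) ∧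
    deriv (fun y : ℝ => Real.sin (Real.sqrt l * (y - 1/2))) 1
      = κ ^ 2 * ∫ s in (0:ℝ)..1, s * Real.sin (Real.sqrt l * (s - 1/2)) := by
  have hω : 0 < Real.sqrt l := Real.sqrt_pos.2 hl
  set ω := Real.sqrt l with hωdef
  have hω0 : ω ≠ 0 := ne_of_gt hω
  have hω2 : ω ^ 2 = l := Real.sq_sqrt hl.le
  clear_value ω
  clear hωdef
  subst hω2
  have hκ0 : κ ^ 2 ≠ 0 := pow_ne_zero 2 hκ.ne'
  -- first derivative
  have hd : ∀ x : ℝ, HasDerivAt (fun y : ℝ => Real.sin (ω * (y - 1/2)))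
      (Real.cos (ω * (x - 1/2)) * ω) x := by
    intro x
    have h1 : HasDerivAt (fun y : ℝ => ω * (y - 1/2)) ω x := by
      simpa using ((hasDerivAt_id x).sub_const (1/2:ℝ)).const_mul ω
    exact (Real.hasDerivAt_sin (ω * (x - 1/2))).comp x h1
  have hdcos : ∀ x : ℝ, HasDerivAt (fun y : ℝ => Real.cos (ω * (y - 1/2)))
      (-Real.sin (ω * (x - 1/2)) * ω) x := by
    intro x
    have h1 : HasDerivAt (fun y : ℝ => ω * (y - 1/2)) ω x := by
      simpa using ((hasDerivAt_id x).sub_const (1/2:ℝ)).const_mul ω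
    exact (Real.hasDerivAt_cos (ω * (x - 1/2))).comp x h1
  have hderiv : deriv (fun y : ℝ => Real.sin (ω * (y - 1/2)))
      = fun x => Real.cos (ω * (x - 1/2)) * ω := funext fun x => (hd x).deriv
  -- key algebraic identity from the transcendental equation
  have key : 2 * κ ^ 2 * Real.sin (ω / 2) = ω * (ω ^ 2 + κ ^ 2) * Real.cos (ω / 2) := by
    rw [Real.tan_eq_sin_div_cos] at htan
    field_simp at htan
    linarith [htan]
  -- the two integrals
  have hI : (∫ s in (0:ℝ)..1, s * Real.sin (ω * (s - 1/2)))
      = -Real.cos (ω/2)/ω + 2 * Real.sin (ω/2)/ω^2 := by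
    have hF : ∀ s ∈ Set.uIcc (0:ℝ) 1, HasDerivAt
        (fun y : ℝ => -(y * Real.cos (ω * (y - 1/2)))/ω + Real.sin (ω * (y - 1/2))/ω^2)
        (s * Real.sin (ω * (s - 1/2))) s := by
      intro s _
      have h1 : HasDerivAt (fun y : ℝ => y * Real.cos (ω * (y - 1/2)))
          (1 * Real.cos (ω * (s - 1/2)) + s * (-Real.sin (ω * (s - 1/2)) * ω)) s :=
        (hasDerivAt_id s).mul (hdcos s)
      have h2 := ((h1.neg).div_const ω).add ((hd s).div_const (ω^2))
      convert h2 using 1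
      · rfl
      · rfl
      · rfl
      field_simp
      ring
    have hint : IntervalIntegrable (fun s : ℝ => s * Real.sin (ω * (s - 1/2)))
        MeasureTheory.volume 0 1 :=
      (by fun_prop : Continuous fun s : ℝ => s * Real.sin (ω * (s - 1/2))).intervalIntegrable 0 1
    rw [intervalIntegral.integral_eq_sub_of_hasDerivAt hF hint]
    have e1 : ω * ((1:ℝ) - 1/2) = ω/2 := by ring
    have e0 : ω * ((0:ℝ) - 1/2) = -(ω/2) := by ring
    rw [e1, e0, Real.sin_neg]
    field_simp
    ring
  have hJ : (∫ s in (0:ℝ)..1, (1 - s) * Real.sin (ω * (s - 1/2)))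
      = Real.cos (ω/2)/ω - 2 * Real.sin (ω/2)/ω^2 := by
    have hF : ∀ s ∈ Set.uIcc (0:ℝ) 1, HasDerivAt
        (fun y : ℝ => -((1 - y) * Real.cos (ω * (y - 1/2)))/ω - Real.sin (ω * (y - 1/2))/ω^2)
        ((1 - s) * Real.sin (ω * (s - 1/2))) s := by
      intro s _
      have h1 : HasDerivAt (fun y : ℝ => (1 - y) * Real.cos (ω * (y - 1/2)))
          ((0 - 1) * Real.cos (ω * (s - 1/2)) + (1 - s) * (-Real.sin (ω * (s - 1/2)) * ω)) s :=
        ((hasDerivAt_const s (1:ℝ)).sub (hasDerivAt_id s)).mul (hdcos s)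
      have h2 := ((h1.neg).div_const ω).sub ((hd s).div_const (ω^2))
      convert h2 using 1
      · rfl
      · rfl
      · rfl
      field_simp
      ring
    have hint : IntervalIntegrable (fun s : ℝ => (1 - s) * Real.sin (ω * (s - 1/2)))
        MeasureTheory.volume 0 1 :=
      (by fun_prop :
        Continuous fun s : ℝ => (1 - s) * Real.sin (ω * (s - 1/2))).intervalIntegrable 0 1
    rw [intervalIntegral.integral_eq_sub_of_hasDerivAt hF hint]
    have e1 : ω * ((1:ℝ) - 1/2) = ω/2 := by ring
    have e0 : ω * ((0:ℝ) - 1/2) = -(ω/2) := by ring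
    rw [e1, e0, Real.sin_neg, Real.cos_neg]
    field_simp
    ring
  refine ⟨?_, ?_, ?_⟩
  · intro x _
    rw [hderiv]
    have h2 : HasDerivAt (fun x : ℝ => Real.cos (ω * (x - 1/2)) * ω)
        ((-Real.sin (ω * (x - 1/2)) * ω) * ω) x := (hdcos x).mul_const ω
    rw [h2.deriv]
    ring
  · rw [hderiv, hJ]
    have e0 : ω * ((0:ℝ) - 1/2) = -(ω/2) := by ring
    simp only [e0, Real.cos_neg]
    field_simp
    linear_combination (-1) * key
  · rw [hderiv, hI]
    have e1 : ω * ((1:ℝ) - 1/2) = ω/2 := by ring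
    simp only [e1]
    field_simp
    linear_combination (-1) * key
end

section
/- Let κ > 0. Then the limit as λ → 0⁺ of (2·tan(√λ/2) − √λ·(λ + κ²)/κ²)/λ^{3/2} exists and equals 1/12 − 1/κ². In particular, λ = 0 is a limiting root of the transcendental eigenvalue equation 2 tan(√λ/2) = √λ(λ+κ²)/κ² (in the sense that the left-hand minus right-hand side vanishes to order higher than λ^{3/2} as λ → 0⁺) if and only if κ² = 12. -/
open Filter Topology Real

lemma sin_div_lim : Tendsto (fun y : ℝ => Real.sin y / y) (𝓝[>] 0) (𝓝 1) := by
  have h := (Real.hasDerivAt_sin 0)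
  rw [hasDerivAt_iff_tendsto_slope] at h
  have h2 : Tendsto (slope Real.sin 0) (𝓝[>] 0) (𝓝 (Real.cos 0)) :=
    h.mono_left (nhdsWithin_mono _ (fun x hx => ne_of_gt hx))
  simpa [slope_fun_def, Real.cos_zero, div_eq_inv_mul] using h2

lemma lemT : Tendsto (fun y : ℝ => (Real.sin y - y * Real.cos y) / y ^ 3) (𝓝[>] 0)
    (𝓝 (1/3)) := by
  apply HasDerivAt.lhopital_zero_nhdsGT
    (f' := fun y => y * Real.sin y) (g' := fun y => 3 * y ^ 2)
  · filter_upwards with y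
    have h1 : HasDerivAt (fun y : ℝ => y * Real.cos y) (1 * Real.cos y + y * (-Real.sin y)) y :=
      (hasDerivAt_id y).mul (Real.hasDerivAt_cos y)
    have h2 := (Real.hasDerivAt_sin y).fun_sub h1
    exact h2.congr_deriv (by ring)
  · filter_upwards with y
    simpa using hasDerivAt_pow 3 y
  · filter_upwards [self_mem_nhdsWithin] with y hy
    have hy0 : (0:ℝ) < y := hy
    exact ne_of_gt (by positivity)
  · have h : Tendsto (fun y : ℝ => Real.sin y - y * Real.cos y) (𝓝 0) (𝓝 0) := by
      have := (Real.continuous_sin.sub (continuous_id.mul Real.continuous_cos)).tendsto 0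
      simp at this; exact this
    exact h.mono_left nhdsWithin_le_nhds
  · have h : Tendsto (fun y : ℝ => y ^ 3) (𝓝 0) (𝓝 0) := by
      simpa using (continuous_pow 3).tendsto (0:ℝ)
    exact h.mono_left nhdsWithin_le_nhds
  · have h : Tendsto (fun y : ℝ => Real.sin y / y * (1/3)) (𝓝[>] 0) (𝓝 (1 * (1/3))) :=
      sin_div_lim.mul_const _
    rw [one_mul] at h
    refine h.congr' ?_
    filter_upwards [self_mem_nhdsWithin] with y hy
    have hy0 : (y:ℝ) ≠ 0 := ne_of_gt hy
    field_simp

lemma lemTan : Tendsto (fun y : ℝ => (Real.tan y - y) / y ^ 3) (𝓝[>] 0) (𝓝 (1/3)) := by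
  have hcos : Tendsto (fun y : ℝ => 1 / Real.cos y) (𝓝[>] 0) (𝓝 1) := by
    have h : Tendsto (fun y : ℝ => 1 / Real.cos y) (𝓝 0) (𝓝 (1 / Real.cos 0)) :=
      tendsto_const_nhds.div (Real.continuous_cos.tendsto 0) (by simp)
    simpa using h.mono_left nhdsWithin_le_nhds
  have h := lemT.mul hcos
  rw [mul_one] at h
  refine h.congr' ?_
  filter_upwards [Ioo_mem_nhdsGT_of_mem (by norm_num : (0:ℝ) ∈ Set.Ico 0 1)] with y hy
  have hy0 : (y:ℝ) ≠ 0 := ne_of_gt hy.1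
  have hc : Real.cos y ≠ 0 := by
    have : |y| < Real.pi / 2 := by
      rw [abs_of_pos hy.1]
      linarith [hy.2, Real.pi_gt_three]
    exact ne_of_gt (Real.cos_pos_of_mem_Ioo (Set.mem_Ioo.2 ⟨by linarith [abs_lt.1 this |>.1], abs_lt.1 this |>.2⟩))
  rw [Real.tan_eq_sin_div_cos]
  field_simp

/-- **The eigenvalue equation near `λ = 0`.**
`(2 tan(√λ/2) - √λ(λ+κ²)/κ²)/λ^{3/2} → 1/12 - 1/κ²` as `λ → 0⁺`; in
particular `λ = 0` is a limiting root of the transcendental eigenvalue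
equation `2 tan(√λ/2) = √λ(λ+κ²)/κ²` (the difference of the two sides
vanishing to order higher than `λ^{3/2}`) iff `κ² = 12`. -/
theorem eigenvalue_equation_limit_at_zero (κ : ℝ) (hκ : 0 < κ) :
    Tendsto (fun l : ℝ =>
        (2 * Real.tan (Real.sqrt l / 2)
          - Real.sqrt l * (l + κ ^ 2) / κ ^ 2) / Real.sqrt l ^ 3)
      (𝓝[>] (0:ℝ)) (𝓝 (1/12 - 1/κ ^ 2)) ∧
    ((1/12 - 1/κ ^ 2 : ℝ) = 0 ↔ κ ^ 2 = 12) := by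
  have hκ2 : κ ^ 2 ≠ 0 := by positivity
  constructor
  · have hhalf : Tendsto (fun x : ℝ => x / 2) (𝓝[>] (0:ℝ)) (𝓝[>] (0:ℝ)) := by
      apply tendsto_nhdsWithin_of_tendsto_nhds_of_eventually_within _
      · simpa using ((continuous_id.div_const 2).tendsto (0:ℝ)).mono_left
          (nhdsWithin_le_nhds (s := Set.Ioi (0:ℝ)))
      · filter_upwards [self_mem_nhdsWithin] with x hx
        exact half_pos (Set.mem_Ioi.mp hx)
    have hA : Tendsto (fun x : ℝ =>
        (2 * Real.tan (x / 2) - x * (x ^ 2 + κ ^ 2) / κ ^ 2) / x ^ 3)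
        (𝓝[>] (0:ℝ)) (𝓝 (1/12 - 1/κ ^ 2)) := by
      have h := ((lemTan.comp hhalf).mul_const (1/4 : ℝ)).sub_const (1/κ ^ 2)
      have heq : (1/3 : ℝ) * (1/4) - 1/κ ^ 2 = 1/12 - 1/κ ^ 2 := by norm_num
      rw [heq] at h
      refine h.congr' ?_
      filter_upwards [self_mem_nhdsWithin] with x hx
      have hx0 : (x:ℝ) ≠ 0 := ne_of_gt hx
      simp only [Function.comp]
      field_simp
      ring
    have hsqrt : Tendsto Real.sqrt (𝓝[>] (0:ℝ)) (𝓝[>] (0:ℝ)) := by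
      apply tendsto_nhdsWithin_of_tendsto_nhds_of_eventually_within _
      · simpa using (Real.continuous_sqrt.tendsto 0).mono_left
          (nhdsWithin_le_nhds (s := Set.Ioi (0:ℝ)))
      · filter_upwards [self_mem_nhdsWithin] with l hl
        exact Real.sqrt_pos.2 hl
    refine (hA.comp hsqrt).congr' ?_
    filter_upwards [self_mem_nhdsWithin] with l hl
    simp only [Function.comp]
    rw [Real.sq_sqrt (le_of_lt hl)]
  · constructor
    · intro h
      have h12 : (1:ℝ)/κ ^ 2 = 1/12 := by linarith
      field_simp at h12
      linarith
    · intro h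
      rw [h]
      norm_num
end

section
/- Let κ > 0 with κ² ≤ 12, and for μ > 0 define D(μ) = sinh(μ)·(1 − κ²/μ²)·( (2κ²/μ)·tanh(μ/2) + μ² − κ² ), which is the hyperbolic (negative-λ, λ = −μ²) form of the determinant Det. Then D(μ) = 0 if and only if μ = κ. Equivalently, λ = −κ² is the only negative root of Det. -/
/-- `sinh t < t * cosh t` for `t > 0`. -/
lemma sinh_lt_mul_cosh {t : ℝ} (ht : 0 < t) : Real.sinh t < t * Real.cosh t := by
  have key : StrictMonoOn (fun x : ℝ => x * Real.cosh x - Real.sinh x) (Set.Ici 0) := by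
    apply strictMonoOn_of_deriv_pos (convex_Ici 0)
    · fun_prop
    · intro x hx
      rw [interior_Ici] at hx
      have hd : HasDerivAt (fun x : ℝ => x * Real.cosh x - Real.sinh x)
          (1 * Real.cosh x + x * Real.sinh x - Real.cosh x) x :=
        ((hasDerivAt_id x).mul (Real.hasDerivAt_cosh x)).sub (Real.hasDerivAt_sinh x)
      rw [hd.deriv]
      have hx' : (0:ℝ) < x := hx
      have := Real.sinh_pos_iff.2 hx'
      nlinarith [mul_pos hx' this]
  have h := key (Set.self_mem_Ici) (Set.mem_Ici.2 ht.le) ht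
  simpa using h

/-- `(t - t³/3) * cosh t < sinh t` for `t > 0`, i.e. `tanh t > t - t³/3`. -/
lemma cubic_mul_cosh_lt_sinh {t : ℝ} (ht : 0 < t) :
    (t - t ^ 3 / 3) * Real.cosh t < Real.sinh t := by
  have key : StrictMonoOn (fun x : ℝ => Real.sinh x - (x - x ^ 3 / 3) * Real.cosh x)
      (Set.Ici 0) := by
    apply strictMonoOn_of_deriv_pos (convex_Ici 0)
    · fun_prop
    · intro x hx
      rw [interior_Ici] at hx
      have hd : HasDerivAt (fun x : ℝ => Real.sinh x - (x - x ^ 3 / 3) * Real.cosh x)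
          (Real.cosh x - ((1 - 3 * x ^ 2 / 3) * Real.cosh x +
            (x - x ^ 3 / 3) * Real.sinh x)) x := by
        have h1 : HasDerivAt (fun x : ℝ => x - x ^ 3 / 3) (1 - 3 * x ^ 2 / 3) x := by
          simpa using (hasDerivAt_id' x).fun_sub ((hasDerivAt_pow 3 x).div_const 3)
        exact (Real.hasDerivAt_sinh x).sub (h1.mul (Real.hasDerivAt_cosh x))
      rw [hd.deriv]
      have hx' : (0:ℝ) < x := hx
      have h2 := sinh_lt_mul_cosh hx'
      have h3 := Real.sinh_pos_iff.2 hx'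
      nlinarith [mul_pos hx' (sub_pos.2 h2), mul_pos (pow_pos hx' 3) h3]
  have h := key (Set.self_mem_Ici) (Set.mem_Ici.2 ht.le) ht
  simpa using h

/-- The third factor is positive when `κ² ≤ 12`. -/
lemma third_factor_pos (κ : ℝ) (hκ : 0 < κ) (hκ12 : κ ^ 2 ≤ 12)
    (μ : ℝ) (hμ : 0 < μ) :
    0 < 2 * κ ^ 2 / μ * Real.tanh (μ / 2) + μ ^ 2 - κ ^ 2 := by
  set t := μ / 2 with htdef
  have ht : 0 < t := by positivity
  have hcosh : 0 < Real.cosh t := Real.cosh_pos t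
  have htanh : t - t ^ 3 / 3 < Real.tanh t := by
    rw [Real.tanh_eq_sinh_div_cosh, lt_div_iff₀ hcosh]
    exact cubic_mul_cosh_lt_sinh ht
  -- key: κ² * (μ - 2 tanh t) < μ³
  have hkey : κ ^ 2 * (μ - 2 * Real.tanh t) < μ ^ 3 := by
    have hbound : μ - 2 * Real.tanh t < μ ^ 3 / 12 := by
      have : μ = 2 * t := by rw [htdef]; ring
      rw [this]; nlinarith
    rcases le_or_gt (μ - 2 * Real.tanh t) 0 with h | h
    · have : κ ^ 2 * (μ - 2 * Real.tanh t) ≤ 0 := mul_nonpos_of_nonneg_of_nonpos (by positivity) h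
      have : 0 < μ ^ 3 := by positivity
      nlinarith
    · calc κ ^ 2 * (μ - 2 * Real.tanh t) ≤ 12 * (μ - 2 * Real.tanh t) := by nlinarith
        _ < 12 * (μ ^ 3 / 12) := by nlinarith
        _ = μ ^ 3 := by ring
  have hfinal : 2 * κ ^ 2 / μ * Real.tanh t + μ ^ 2 - κ ^ 2
      = (2 * κ ^ 2 * Real.tanh t + (μ ^ 2 - κ ^ 2) * μ) / μ := by
    field_simp; ring
  rw [hfinal]
  apply div_pos _ hμ
  nlinarith

/-- **`λ = -κ²` is the only negative root of `Det`.** For `0 < κ` with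
`κ² ≤ 12` and `μ > 0`, the hyperbolic form
`D(μ) = sinh(μ)(1-κ²/μ²)((2κ²/μ)tanh(μ/2) + μ² - κ²)` of the determinant
(obtained by setting `λ = -μ²`) vanishes iff `μ = κ`. -/
theorem det_negative_root (κ : ℝ) (hκ : 0 < κ) (hκ12 : κ ^ 2 ≤ 12)
    (μ : ℝ) (hμ : 0 < μ) :
    Real.sinh μ * (1 - κ ^ 2 / μ ^ 2) *
        (2 * κ ^ 2 / μ * Real.tanh (μ / 2) + μ ^ 2 - κ ^ 2) = 0 ↔
      μ = κ := by
  have hsinh : 0 < Real.sinh μ := Real.sinh_pos_iff.2 hμ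
  have hthird := third_factor_pos κ hκ hκ12 μ hμ
  constructor
  · intro h
    have hmid : 1 - κ ^ 2 / μ ^ 2 = 0 := by
      rcases mul_eq_zero.1 h with h1 | h1
      · rcases mul_eq_zero.1 h1 with h2 | h2
        · exact absurd h2 hsinh.ne'
        · exact h2
      · exact absurd h1 hthird.ne'
    have hμ2 : μ ^ 2 = κ ^ 2 := by
      have : μ ^ 2 ≠ 0 := by positivity
      field_simp at hmid
      linarith
    nlinarith [sq_nonneg (μ - κ), sq_nonneg (μ + κ)]
  · intro h
    subst h
    have : 1 - μ ^ 2 / μ ^ 2 = 0 := by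
      field_simp
      norm_num
    rw [this, mul_zero, zero_mul]
end

section
/- Let κ > 0. The time-independent function u(x,t) = cosh(κ(x − 1/2)) is a classical solution of the damped heat equation u_t = u_xx − κ²u on (0,1) × (0,∞), satisfying for all t the non-local boundary conditions u_x(0,t) = −κ²∫₀¹(1−s)·u(s,t)ds and u_x(1,t) = κ²∫₀¹ s·u(s,t)ds. That is, cosh(κ(x − 1/2)) is a steady state of the linearized PNP equation under these boundary conditions. -/
private lemma hlin (κ x : ℝ) : HasDerivAt (fun y : ℝ => κ * (y - 1/2)) κ x := by
  exact (((hasDerivAt_id x).sub_const (1/2)).const_mul κ).congr_deriv (by ring)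

private lemma hcosh (κ x : ℝ) :
    HasDerivAt (fun y => Real.cosh (κ * (y - 1/2))) (κ * Real.sinh (κ * (x - 1/2))) x := by
  exact ((Real.hasDerivAt_cosh _).comp x (hlin κ x)).congr_deriv (by ring)

private lemma hsinh (κ x : ℝ) :
    HasDerivAt (fun y => Real.sinh (κ * (y - 1/2))) (κ * Real.cosh (κ * (x - 1/2))) x := by
  exact ((Real.hasDerivAt_sinh _).comp x (hlin κ x)).congr_deriv (by ring)

private lemma deriv_cosh' (κ : ℝ) :
    deriv (fun y => Real.cosh (κ * (y - 1/2))) = fun x => κ * Real.sinh (κ * (x - 1/2)) :=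
  funext fun x => (hcosh κ x).deriv

private lemma int1 (κ : ℝ) (hκ : 0 < κ) :
    ∫ s in (0:ℝ)..1, (1 - s) * Real.cosh (κ * (s - 1/2)) = Real.sinh (κ / 2) / κ := by
  have key : ∀ s ∈ Set.uIcc (0:ℝ) 1,
      HasDerivAt (fun s => (1 - s) * Real.sinh (κ * (s - 1/2)) / κ
          + Real.cosh (κ * (s - 1/2)) / κ ^ 2)
        ((1 - s) * Real.cosh (κ * (s - 1/2))) s := by
    intro s _
    have h1 : HasDerivAt (fun s : ℝ => (1 - s) * Real.sinh (κ * (s - 1/2)) / κ)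
        (((-1) * Real.sinh (κ * (s - 1/2)) + (1 - s) * (κ * Real.cosh (κ * (s - 1/2)))) / κ) s := by
      have := (((hasDerivAt_const s (1:ℝ)).sub (hasDerivAt_id s)).mul (hsinh κ s)).div_const κ
      simpa using this
    have h2 : HasDerivAt (fun s : ℝ => Real.cosh (κ * (s - 1/2)) / κ ^ 2)
        ((κ * Real.sinh (κ * (s - 1/2))) / κ ^ 2) s := (hcosh κ s).div_const _
    have := h1.add h2
    refine this.congr_deriv ?_
    field_simp
    ring
  have := intervalIntegral.integral_eq_sub_of_hasDerivAt key (by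
    apply Continuous.intervalIntegrable; fun_prop)
  rw [this]
  have h2 : κ * ((1:ℝ) - 1/2) = κ / 2 := by ring
  have h3 : κ * ((0:ℝ) - 1/2) = -(κ / 2) := by ring
  rw [h2, h3, Real.sinh_neg, Real.cosh_neg]
  field_simp
  ring

private lemma int2 (κ : ℝ) (hκ : 0 < κ) :
    ∫ s in (0:ℝ)..1, s * Real.cosh (κ * (s - 1/2)) = Real.sinh (κ / 2) / κ := by
  have key : ∀ s ∈ Set.uIcc (0:ℝ) 1,
      HasDerivAt (fun s => s * Real.sinh (κ * (s - 1/2)) / κ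
          - Real.cosh (κ * (s - 1/2)) / κ ^ 2)
        (s * Real.cosh (κ * (s - 1/2))) s := by
    intro s _
    have h1 : HasDerivAt (fun s : ℝ => s * Real.sinh (κ * (s - 1/2)) / κ)
        ((1 * Real.sinh (κ * (s - 1/2)) + s * (κ * Real.cosh (κ * (s - 1/2)))) / κ) s := by
      have := ((hasDerivAt_id s).mul (hsinh κ s)).div_const κ
      simpa using this
    have h2 : HasDerivAt (fun s : ℝ => Real.cosh (κ * (s - 1/2)) / κ ^ 2)
        ((κ * Real.sinh (κ * (s - 1/2))) / κ ^ 2) s := (hcosh κ s).div_const _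
    have := h1.sub h2
    refine this.congr_deriv ?_
    field_simp
    ring
  have := intervalIntegral.integral_eq_sub_of_hasDerivAt key (by
    apply Continuous.intervalIntegrable; fun_prop)
  rw [this]
  have h2 : κ * ((1:ℝ) - 1/2) = κ / 2 := by ring
  have h3 : κ * ((0:ℝ) - 1/2) = -(κ / 2) := by ring
  rw [h2, h3, Real.sinh_neg, Real.cosh_neg]
  field_simp
  ring

/-- **The steady state.** The time-independent function
`u(x,t) = cosh(κ(x-1/2))` is a classical solution of the linearized PNP
equation `u_t = u_xx - κ²u` under the non-local boundary conditions, i.e. it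
is a steady state of the linearized PNP equation. -/
theorem cosh_steady_state (κ : ℝ) (hκ : 0 < κ) :
    IsClassicalSol κ (κ ^ 2) (fun x _ => Real.cosh (κ * (x - 1/2))) := by
  have hcd : ContDiff ℝ 2 fun x : ℝ => Real.cosh (κ * (x - 1/2)) :=
    (Real.contDiff_cosh.of_le le_top).comp ((contDiff_const.mul (contDiff_id.sub contDiff_const)))
  refine ⟨fun t _ => hcd.contDiffOn, fun x _ => contDiffOn_const, ?_, ?_, ?_, ?_⟩
  · exact (Continuous.continuousOn (by fun_prop))
  · intro x hx t ht
    rw [deriv_const, deriv_cosh']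
    have : deriv (fun x => κ * Real.sinh (κ * (x - 1/2))) x
        = κ * (κ * Real.cosh (κ * (x - 1/2))) := ((hsinh κ x).const_mul κ).deriv
    rw [this]; ring
  · intro t _
    have hd : derivWithin (fun x => Real.cosh (κ * (x - 1/2))) (Set.Icc (0:ℝ) 1) 0
        = κ * Real.sinh (κ * ((0:ℝ) - 1/2)) :=
      (hcosh κ 0).hasDerivWithinAt.derivWithin
        ((uniqueDiffOn_Icc (by norm_num : (0:ℝ) < 1)) 0 (by norm_num))
    rw [hd, int1 κ hκ]
    have : κ * ((0:ℝ) - 1/2) = -(κ/2) := by ring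
    rw [this, Real.sinh_neg]
    field_simp
  · intro t _
    have hd : derivWithin (fun x => Real.cosh (κ * (x - 1/2))) (Set.Icc (0:ℝ) 1) 1
        = κ * Real.sinh (κ * ((1:ℝ) - 1/2)) :=
      (hcosh κ 1).hasDerivWithinAt.derivWithin
        ((uniqueDiffOn_Icc (by norm_num : (0:ℝ) < 1)) 1 (by norm_num))
    rw [hd, int2 κ hκ]
    have : κ * ((1:ℝ) - 1/2) = κ/2 := by ring
    rw [this]
    field_simp
end
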